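/- arXiv:2504.21591 — 4 statements merged into one kernel-verified Lean document; each statement's English description precedes it below -/
import Mathlib

section
/- Let E : ℝ^d → ℝ satisfy |∂_x^α E(x)| ≤ C (1+|x|)^{−(|α|+d−2)} for |α| = 0,1,2, and let f : ℝ^d → ℝ satisfy ‖(1+|x|)^d f‖_{L^∞} + ‖f‖_{L^1} < ∞. Then for |α| = 0,1, |(∂_x^α E ∗ f)(x)| ≤ C' (1+|x|)^{−(|α|+d−2)} ( ‖(1+|x|)^d f‖_{L^∞} + ‖f‖_{L^1} ) for all x ∈ ℝ^d. -/
open MeasureTheory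

noncomputable section

open Metric Set in
lemma ball_int_bound (d : ℕ) (hd : 3 ≤ d) (q : ℝ) (hq0 : 0 ≤ q) (hqd : q ≤ (d:ℝ) - 1)
    (R : ℝ) (hR : 0 ≤ R) :
    ∫ z in Metric.closedBall (0 : EuclideanSpace ℝ (Fin d)) R, (1 + ‖z‖) ^ (-q) ≤
      (d : ℝ) * (volume (Metric.ball (0 : EuclideanSpace ℝ (Fin d)) 1)).toReal *
        (1 + R) ^ ((d:ℝ) - q) := by
  haveI : Nonempty (Fin d) := ⟨⟨0, by omega⟩⟩
  haveI : Nontrivial (EuclideanSpace ℝ (Fin d)) := inferInstance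
  set X := EuclideanSpace ℝ (Fin d)
  set φ : ℝ → ℝ := (Set.Icc 0 R).indicator (fun r => (1 + r) ^ (-q)) with hφ
  have key := integral_fun_norm_addHaar (volume : Measure X) φ
  have hdim : Module.finrank ℝ X = d := finrank_euclideanSpace_fin
  rw [hdim] at key
  have hLHS : (∫ x : X, φ ‖x‖) =
      ∫ z in Metric.closedBall (0 : EuclideanSpace ℝ (Fin d)) R, (1 + ‖z‖) ^ (-q) := by
    rw [← integral_indicator (measurableSet_closedBall)]
    congr 1
    funext z
    rw [hφ]
    by_cases hz : ‖z‖ ≤ R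
    · rw [Set.indicator_of_mem (by simp [Set.mem_Icc, hz]; exact norm_nonneg _),
        Set.indicator_of_mem (by simp [Metric.mem_closedBall, dist_zero_right, hz])]
    · rw [Set.indicator_of_notMem (by simp [Set.mem_Icc, hz]),
        Set.indicator_of_notMem (by simp [Metric.mem_closedBall, dist_zero_right, hz])]
  have hinner : (∫ y in Set.Ioi (0:ℝ), y ^ (d - 1) • φ y) =
      ∫ y in Set.Ioc (0:ℝ) R, y ^ (d - 1) * (1 + y) ^ (-q) := by
    have h1 : ∀ y : ℝ, y ^ (d-1) • φ y =
        (Set.Icc 0 R).indicator (fun y => y ^ (d-1) * (1 + y) ^ (-q)) y := by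
      intro y
      rw [hφ]
      by_cases h : y ∈ Set.Icc 0 R
      · rw [Set.indicator_of_mem h, Set.indicator_of_mem h, smul_eq_mul]
      · rw [Set.indicator_of_notMem h, Set.indicator_of_notMem h, smul_eq_mul, mul_zero]
    simp_rw [h1]
    rw [setIntegral_indicator measurableSet_Icc]
    have hset : Set.Ioi (0:ℝ) ∩ Set.Icc 0 R = Set.Ioc 0 R := by
      ext y
      simp only [Set.mem_inter_iff, Set.mem_Ioi, Set.mem_Icc, Set.mem_Ioc]
      constructor
      · rintro ⟨h1, _, h3⟩; exact ⟨h1, h3⟩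
      · rintro ⟨h1, h2⟩; exact ⟨h1, le_of_lt h1, h2⟩
    rw [hset]
  have hbnd : |∫ y in Set.Ioc (0:ℝ) R, y ^ (d - 1) * (1 + y) ^ (-q)| ≤
      (1 + R) ^ ((d:ℝ) - 1 - q) * R := by
    have := norm_setIntegral_le_of_norm_le_const (μ := volume)
      (s := Set.Ioc (0:ℝ) R) (f := fun y => y ^ (d-1) * (1 + y) ^ (-q))
      (C := (1 + R) ^ ((d:ℝ) - 1 - q)) (by simp [Real.volume_Ioc]) ?_
    · rw [Real.norm_eq_abs] at this
      calc |∫ y in Set.Ioc (0:ℝ) R, y ^ (d - 1) * (1 + y) ^ (-q)|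
          ≤ (1 + R) ^ ((d:ℝ) - 1 - q) * (volume (Set.Ioc (0:ℝ) R)).toReal := this
        _ = (1 + R) ^ ((d:ℝ) - 1 - q) * R := by
            rw [Real.volume_Ioc, ENNReal.toReal_ofReal (by linarith)]
            ring_nf
    · intro y hy
      obtain ⟨hy0, hyR⟩ := hy
      have hy1 : (0:ℝ) < 1 + y := by linarith
      have h1R : (0:ℝ) < 1 + R := by linarith
      rw [Real.norm_eq_abs, abs_of_nonneg (by positivity)]
      calc y ^ (d-1) * (1 + y) ^ (-q)
          ≤ (1 + y) ^ (d-1) * (1 + y) ^ (-q) := by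
            apply mul_le_mul_of_nonneg_right _ (by positivity)
            exact pow_le_pow_left₀ hy0.le (by linarith) _
        _ = (1 + y) ^ (((d:ℝ) - 1) - q) := by
            rw [← Real.rpow_natCast (1+y) (d-1), ← Real.rpow_add hy1]
            congr 1
            push_cast [Nat.cast_sub (by omega : 1 ≤ d)]
            ring
        _ ≤ (1 + R) ^ (((d:ℝ) - 1) - q) := by
            apply Real.rpow_le_rpow hy1.le (by linarith) (by linarith)
  rw [hLHS] at key
  rw [key, hinner]
  have hB0 : (0:ℝ) ≤ (volume (Metric.ball (0 : EuclideanSpace ℝ (Fin d)) 1)).toReal := ENNReal.toReal_nonneg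
  have h1R : (0:ℝ) < 1 + R := by linarith
  have step : (∫ y in Set.Ioc (0:ℝ) R, y ^ (d - 1) * (1 + y) ^ (-q)) ≤
      (1 + R) ^ ((d:ℝ) - q) := by
    calc (∫ y in Set.Ioc (0:ℝ) R, y ^ (d - 1) * (1 + y) ^ (-q))
        ≤ (1 + R) ^ ((d:ℝ) - 1 - q) * R := le_trans (le_abs_self _) hbnd
      _ ≤ (1 + R) ^ ((d:ℝ) - 1 - q) * (1 + R) := by
          apply mul_le_mul_of_nonneg_left (by linarith) (by positivity)
      _ = (1 + R) ^ ((d:ℝ) - q) := by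
          rw [← Real.rpow_add_one h1R.ne']
          ring_nf
  simp only [nsmul_eq_mul, smul_eq_mul]
  calc (d:ℝ) * ((volume (Metric.ball (0 : EuclideanSpace ℝ (Fin d)) 1)).toReal *
        ∫ y in Set.Ioc (0:ℝ) R, y ^ (d - 1) * (1 + y) ^ (-q))
      ≤ (d:ℝ) * ((volume (Metric.ball (0 : EuclideanSpace ℝ (Fin d)) 1)).toReal * (1 + R) ^ ((d:ℝ) - q)) := by
        apply mul_le_mul_of_nonneg_left (mul_le_mul_of_nonneg_left step hB0) (by positivity)
    _ = (d : ℝ) * (volume (Metric.ball (0 : EuclideanSpace ℝ (Fin d)) 1)).toReal * (1 + R) ^ ((d:ℝ) - q) := by ring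

set_option maxHeartbeats 1000000 in
/-- Convolution decay estimate: if `|∂^α E(x)| ≤ C(1+|x|)^{−(|α|+d−2)}` for `|α| ≤ 2`
and `|f(x)| ≤ M(1+|x|)^{−d}` with `f ∈ L¹`, then for `|α| ≤ 1`
`|(∂^α E ∗ f)(x)| ≤ C'(1+|x|)^{−(|α|+d−2)} (M + ‖f‖_{L¹})`. -/
theorem convolution_kernel_decay (d : ℕ) (hd : 3 ≤ d)
    (E : EuclideanSpace ℝ (Fin d) → ℝ) (C : ℝ) (hC : 0 < C)
    (hE : ContDiff ℝ 2 E)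
    (hEbound : ∀ n ≤ 2, ∀ x : EuclideanSpace ℝ (Fin d),
      ‖iteratedFDeriv ℝ n E x‖ ≤ C * (1 + ‖x‖) ^ (-((n : ℝ) + d - 2))) :
    ∃ C' : ℝ, 0 < C' ∧
      ∀ (f : EuclideanSpace ℝ (Fin d) → ℝ) (M : ℝ),
        Integrable f volume →
        (∀ x, |f x| ≤ M * (1 + ‖x‖) ^ (-(d : ℝ))) →
        ∀ n ≤ 1, ∀ x : EuclideanSpace ℝ (Fin d),
          ‖MeasureTheory.convolution f (iteratedFDeriv ℝ n E)
              (ContinuousLinearMap.lsmul ℝ ℝ) volume x‖ ≤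
            C' * (1 + ‖x‖) ^ (-((n : ℝ) + d - 2)) * (M + ∫ y, |f y|) := by
  classical
  set B : ℝ := (volume (Metric.ball (0 : EuclideanSpace ℝ (Fin d)) 1)).toReal with hBdef
  have hB0 : 0 ≤ B := ENNReal.toReal_nonneg
  refine ⟨C * 2 ^ d * (1 + d * B) + 1, by positivity, ?_⟩
  intro f M hf hfM n hn x
  set q : ℝ := (n : ℝ) + d - 2 with hqdef
  have hd3 : (3:ℝ) ≤ (d:ℝ) := by exact_mod_cast hd
  have hq1 : 1 ≤ q := by
    have : (0:ℝ) ≤ (n:ℝ) := Nat.cast_nonneg n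
    simp only [hqdef]; linarith
  have hq0 : 0 ≤ q := by linarith
  have hqd : q ≤ (d:ℝ) - 1 := by
    have : (n:ℝ) ≤ 1 := by exact_mod_cast hn
    simp only [hqdef]; linarith
  have hqd' : q ≤ (d:ℝ) := by linarith
  have hx0 : (0:ℝ) ≤ ‖x‖ := norm_nonneg x
  have hx1 : (0:ℝ) < 1 + ‖x‖ := by linarith
  have hM : 0 ≤ M := by
    have h0 := hfM 0
    have hn0 : ‖(0:EuclideanSpace ℝ (Fin d))‖ = 0 := norm_zero
    rw [hn0] at h0
    simp only [add_zero, Real.one_rpow] at h0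
    exact le_trans (abs_nonneg _) (by simpa using h0)
  have hn2 : n ≤ 2 := le_trans hn (by norm_num)
  set g := iteratedFDeriv ℝ n E with hgdef
  have hgc : Continuous g := hE.continuous_iteratedFDeriv (by exact_mod_cast hn2)
  have hgb : ∀ z : EuclideanSpace ℝ (Fin d), ‖g z‖ ≤ C * (1 + ‖z‖) ^ (-q) := fun z => hEbound n hn2 z
  set R : ℝ := ‖x‖ / 2 with hRdef
  have hR0 : 0 ≤ R := by positivity
  -- the half inequality
  have hhalf : ∀ s t : ℝ, 0 ≤ s → s ≤ (d:ℝ) → (1 + ‖x‖) / 2 ≤ t →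
      t ^ (-s) ≤ 2 ^ d * (1 + ‖x‖) ^ (-s) := by
    intro s t hs0 hsd ht
    have h2 : (0:ℝ) < (1 + ‖x‖) / 2 := by positivity
    calc t ^ (-s) ≤ ((1 + ‖x‖) / 2) ^ (-s) :=
          Real.rpow_le_rpow_of_nonpos h2 ht (neg_nonpos.2 hs0)
      _ = 2 ^ s * (1 + ‖x‖) ^ (-s) := by
          rw [div_eq_mul_inv, Real.mul_rpow hx1.le (by norm_num),
            Real.inv_rpow (by norm_num), ← Real.rpow_neg (by norm_num), neg_neg]
          ring
      _ ≤ 2 ^ d * (1 + ‖x‖) ^ (-s) := by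
          apply mul_le_mul_of_nonneg_right _ (Real.rpow_nonneg hx1.le _)
          rw [← Real.rpow_natCast 2 d]
          exact Real.rpow_le_rpow_of_exponent_le one_le_two hsd
  have hhalfR : (1 + ‖x‖) / 2 ≤ 1 + R := by
    simp only [hRdef]; linarith
  -- the near-field kernel
  set h : EuclideanSpace ℝ (Fin d) → ℝ := (Metric.closedBall (0:EuclideanSpace ℝ (Fin d)) R).indicator (fun z => (1 + ‖z‖) ^ (-q)) with hhdef
  have hcont : Continuous fun z : EuclideanSpace ℝ (Fin d) => (1 + ‖z‖) ^ (-q) :=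
    (continuous_const.add continuous_norm).rpow_const (fun z => Or.inl (by positivity : (0:ℝ) < 1 + ‖z‖).ne')
  have hhint : Integrable h volume := by
    rw [integrable_indicator_iff measurableSet_closedBall]
    exact hcont.continuousOn.integrableOn_compact (isCompact_closedBall _ _)
  have hh0 : ∀ z, 0 ≤ h z := by
    intro z
    apply Set.indicator_nonneg
    intro z _
    positivity
  have hhle : ∀ z, h z ≤ (1 + ‖z‖) ^ (-q) := by
    intro z
    by_cases hz : z ∈ Metric.closedBall (0:EuclideanSpace ℝ (Fin d)) R
    · rw [hhdef, Set.indicator_of_mem hz]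
    · rw [hhdef, Set.indicator_of_notMem hz]; positivity
  -- the two comparison functions
  set K1 : ℝ := C * 2 ^ d * (1 + ‖x‖) ^ (-q) with hK1
  set K2 : ℝ := M * 2 ^ d * (1 + ‖x‖) ^ (-(d:ℝ)) * C with hK2
  have hK10 : 0 ≤ K1 := by positivity
  have hK20 : 0 ≤ K2 := by positivity
  -- pointwise bound
  have key : ∀ y : EuclideanSpace ℝ (Fin d), ‖f y‖ * ‖g (x - y)‖ ≤ ‖f y‖ * K1 + K2 * h (x - y) := by
    intro y
    have hfy0 : 0 ≤ ‖f y‖ := norm_nonneg _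
    by_cases hcase : ‖x - y‖ ≤ R
    · -- near: use decay of f
      have hyR : R ≤ ‖y‖ := by
        have h1 : ‖x‖ ≤ ‖x - y‖ + ‖y‖ := by
          simpa using norm_add_le (x - y) y
        simp only [hRdef] at hcase ⊢
        linarith
      have hfy : ‖f y‖ ≤ M * (2 ^ d * (1 + ‖x‖) ^ (-(d:ℝ))) := by
        calc ‖f y‖ = |f y| := (Real.norm_eq_abs _)
          _ ≤ M * (1 + ‖y‖) ^ (-(d:ℝ)) := hfM y
          _ ≤ M * (2 ^ d * (1 + ‖x‖) ^ (-(d:ℝ))) := by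
              apply mul_le_mul_of_nonneg_left _ hM
              exact hhalf (d:ℝ) (1 + ‖y‖) (by positivity) le_rfl (by linarith)
      have hgz : ‖g (x - y)‖ ≤ C * h (x - y) := by
        have hmem : x - y ∈ Metric.closedBall (0:EuclideanSpace ℝ (Fin d)) R := by
          simpa [Metric.mem_closedBall, dist_zero_right] using hcase
        rw [hhdef, Set.indicator_of_mem hmem]
        exact hgb (x - y)
      have : ‖f y‖ * ‖g (x - y)‖ ≤ (M * (2 ^ d * (1 + ‖x‖) ^ (-(d:ℝ)))) * (C * h (x - y)) :=
        mul_le_mul hfy hgz (norm_nonneg _) (by positivity)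
      have h2 : (M * (2 ^ d * (1 + ‖x‖) ^ (-(d:ℝ)))) * (C * h (x - y)) = K2 * h (x - y) := by
        rw [hK2]; ring
      have h3 : 0 ≤ ‖f y‖ * K1 := by positivity
      linarith [this, h2 ▸ this]
    · -- far: use decay of kernel
      push_neg at hcase
      have hker : (1 + ‖x - y‖) ^ (-q) ≤ 2 ^ d * (1 + ‖x‖) ^ (-q) :=
        hhalf q (1 + ‖x - y‖) hq0 hqd' (by linarith)
      have hgz : ‖g (x - y)‖ ≤ C * (2 ^ d * (1 + ‖x‖) ^ (-q)) := by
        refine le_trans (hgb (x - y)) ?_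
        exact mul_le_mul_of_nonneg_left hker hC.le
      have h1 : ‖f y‖ * ‖g (x - y)‖ ≤ ‖f y‖ * (C * (2 ^ d * (1 + ‖x‖) ^ (-q))) :=
        mul_le_mul_of_nonneg_left hgz hfy0
      have h2 : ‖f y‖ * (C * (2 ^ d * (1 + ‖x‖) ^ (-q))) = ‖f y‖ * K1 := by
        rw [hK1]; ring
      have h3 : 0 ≤ K2 * h (x - y) := mul_nonneg hK20 (hh0 _)
      linarith [h2 ▸ h1]
  -- integrability
  have hgcx : Continuous fun y : EuclideanSpace ℝ (Fin d) => ‖g (x - y)‖ :=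
    (hgc.comp (continuous_const.sub continuous_id)).norm
  have hFm : AEStronglyMeasurable (fun y : EuclideanSpace ℝ (Fin d) => ‖f y‖ * ‖g (x - y)‖) volume :=
    hf.aestronglyMeasurable.norm.mul hgcx.aestronglyMeasurable
  have hFint : Integrable (fun y : EuclideanSpace ℝ (Fin d) => ‖f y‖ * ‖g (x - y)‖) volume := by
    apply Integrable.mono (hf.norm.const_mul C) hFm
    filter_upwards with y
    have h1 : ‖g (x - y)‖ ≤ C := by
      refine le_trans (hgb (x - y)) ?_
      calc C * (1 + ‖x - y‖) ^ (-q) ≤ C * 1 := by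
            apply mul_le_mul_of_nonneg_left _ hC.le
            apply Real.rpow_le_one_of_one_le_of_nonpos (by linarith [norm_nonneg (x - y)])
            linarith
        _ = C := mul_one C
    calc ‖‖f y‖ * ‖g (x - y)‖‖ = ‖f y‖ * ‖g (x - y)‖ := by
          rw [Real.norm_eq_abs, abs_of_nonneg (by positivity)]
      _ ≤ C * ‖f y‖ := by
          rw [mul_comm C]
          exact mul_le_mul_of_nonneg_left h1 (norm_nonneg _)
      _ ≤ ‖C * ‖f y‖‖ := le_abs_self _
  have hT1 : Integrable (fun y : EuclideanSpace ℝ (Fin d) => ‖f y‖ * K1) volume := hf.norm.mul_const K1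
  have hT2int : Integrable (fun y : EuclideanSpace ℝ (Fin d) => h (x - y)) volume :=
    (integrable_comp_sub_left h x).2 hhint
  have hT2 : Integrable (fun y : EuclideanSpace ℝ (Fin d) => K2 * h (x - y)) volume := hT2int.const_mul K2
  -- the convolution bound
  have hconv : ‖MeasureTheory.convolution f g (ContinuousLinearMap.lsmul ℝ ℝ) volume x‖ ≤
      ∫ y, ‖f y‖ * ‖g (x - y)‖ := by
    rw [MeasureTheory.convolution_def]
    refine le_trans (norm_integral_le_integral_norm _) ?_
    apply le_of_eq
    congr 1
    funext y
    rw [ContinuousLinearMap.lsmul_apply, norm_smul]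
  have hsplit : (∫ y, ‖f y‖ * ‖g (x - y)‖) ≤
      (∫ y, ‖f y‖ * K1) + ∫ y, K2 * h (x - y) := by
    rw [← integral_add hT1 hT2]
    exact integral_mono hFint (hT1.add hT2) key
  have hI1 : (∫ y, ‖f y‖ * K1) = (∫ y, ‖f y‖) * K1 := integral_mul_const K1 _
  have hI2 : (∫ y, K2 * h (x - y)) = K2 * ∫ z, h z := by
    rw [integral_const_mul]
    congr 1
    exact integral_sub_left_eq_self h volume x
  have hI3 : (∫ z, h z) ≤ (d : ℝ) * B * (1 + R) ^ ((d:ℝ) - q) := by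
    rw [hhdef, integral_indicator measurableSet_closedBall]
    exact ball_int_bound d hd q hq0 hqd R hR0
  have hI4 : (1 + R) ^ ((d:ℝ) - q) ≤ (1 + ‖x‖) ^ ((d:ℝ) - q) := by
    apply Real.rpow_le_rpow (by linarith) _ (by linarith)
    simp only [hRdef]; linarith
  have hrpow : (1 + ‖x‖) ^ (-(d:ℝ)) * (1 + ‖x‖) ^ ((d:ℝ) - q) = (1 + ‖x‖) ^ (-q) := by
    rw [← Real.rpow_add hx1]
    ring_nf
  set F : ℝ := ∫ y, ‖f y‖ with hFdef
  have hFnn : 0 ≤ F := integral_nonneg fun y => norm_nonneg _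
  have habs : (∫ y, |f y|) = F := rfl
  have hfinal : (∫ y, ‖f y‖ * K1) + (∫ y, K2 * h (x - y)) ≤
      (C * 2 ^ d * (1 + d * B) + 1) * (1 + ‖x‖) ^ (-q) * (M + F) := by
    rw [hI1, hI2]
    have hP : 0 ≤ (1 + ‖x‖) ^ (-q) := Real.rpow_nonneg hx1.le _
    have h2 : K2 * (∫ z, h z) ≤ C * 2 ^ d * ((d:ℝ) * B) * M * (1 + ‖x‖) ^ (-q) := by
      calc K2 * (∫ z, h z) ≤ K2 * ((d : ℝ) * B * (1 + ‖x‖) ^ ((d:ℝ) - q)) := by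
            apply mul_le_mul_of_nonneg_left _ hK20
            refine le_trans hI3 ?_
            apply mul_le_mul_of_nonneg_left hI4 (by positivity)
        _ = C * 2 ^ d * ((d:ℝ) * B) * M * ((1 + ‖x‖) ^ (-(d:ℝ)) * (1 + ‖x‖) ^ ((d:ℝ) - q)) := by
            rw [hK2]; ring
        _ = C * 2 ^ d * ((d:ℝ) * B) * M * (1 + ‖x‖) ^ (-q) := by rw [hrpow]
    have h1 : F * K1 = C * 2 ^ d * F * (1 + ‖x‖) ^ (-q) := by rw [hK1]; ring
    have hdB : 0 ≤ (d:ℝ) * B := by positivity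
    have hC2 : (0:ℝ) ≤ C * 2 ^ d := by positivity
    nlinarith [mul_nonneg (mul_nonneg hC2 hM) hP, mul_nonneg (mul_nonneg hC2 hFnn) hP,
      mul_nonneg (mul_nonneg (mul_nonneg hC2 hdB) hFnn) hP,
      mul_nonneg (mul_nonneg hM hP) hFnn, mul_nonneg hM hP, mul_nonneg hFnn hP]
  rw [habs]
  calc ‖MeasureTheory.convolution f g (ContinuousLinearMap.lsmul ℝ ℝ) volume x‖
      ≤ ∫ y, ‖f y‖ * ‖g (x - y)‖ := hconv
    _ ≤ (∫ y, ‖f y‖ * K1) + ∫ y, K2 * h (x - y) := hsplit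
    _ ≤ (C * 2 ^ d * (1 + d * B) + 1) * (1 + ‖x‖) ^ (-q) * (M + F) := hfinal
end
end

section
/- Let E : ℝ^d → ℝ satisfy |∂_x^α E(x)| ≤ C(1+|x|)^{−(|α|+d−1)} for |α| = 0,1, and assume f satisfies ‖(1+|x|)^d f‖_{L^∞} < ∞. Then for |α| = 0,1 and |x| ≥ 2, |(∂_x^α E ∗ f)(x)| ≤ C' (log|x|) (1+|x|)^{−(|α|+d−1)} ‖(1+|x|)^d f‖_{L^∞}. -/
open MeasureTheory Set Metric
open scoped ENNReal
noncomputable section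

lemma polar_lintegral (d : ℕ) (hd : 1 ≤ d) (g : ℝ → ℝ≥0∞) (hg : Measurable g) :
    ∫⁻ x : EuclideanSpace ℝ (Fin d), g ‖x‖ =
      (volume : Measure (EuclideanSpace ℝ (Fin d))).toSphere Set.univ *
        ∫⁻ r in Set.Ioi (0:ℝ), ENNReal.ofReal (r ^ (d-1)) * g r := by
  haveI : Nonempty (Fin d) := Fin.pos_iff_nonempty.mp (by omega)
  set V := EuclideanSpace ℝ (Fin d)
  have hdim : Module.finrank ℝ V = d := finrank_euclideanSpace_fin
  have hmp := (volume : Measure (EuclideanSpace ℝ (Fin d))).measurePreserving_homeomorphUnitSphereProd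
  have step1 : ∫⁻ x : V, g ‖x‖ =
      ∫⁻ (x : ({0}ᶜ : Set V)), g ‖(x : V)‖ ∂((volume : Measure (EuclideanSpace ℝ (Fin d))).comap Subtype.val) :=
    ((lintegral_subtype_comap (measurableSet_singleton (0:V)).compl (fun x : V => g ‖x‖)).trans
      (by rw [MeasureTheory.restrict_compl_singleton])).symm
  have step2 : ∫⁻ (x : ({0}ᶜ : Set V)), g ‖(x : V)‖ ∂((volume : Measure (EuclideanSpace ℝ (Fin d))).comap Subtype.val) =
      ∫⁻ p : sphere (0:V) 1 × Set.Ioi (0:ℝ), g p.2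
        ∂((volume : Measure (EuclideanSpace ℝ (Fin d))).toSphere.prod (Measure.volumeIoiPow (Module.finrank ℝ V - 1))) :=
    Eq.trans (lintegral_congr fun x => by simp [homeomorphUnitSphereProd_apply_snd_coe])
      (hmp.lintegral_comp (f := fun p : sphere (0:V) 1 × Set.Ioi (0:ℝ) => g p.2)
      (hg.comp (measurable_subtype_coe.comp measurable_snd)))
  have step3 : ∫⁻ p : sphere (0:V) 1 × Set.Ioi (0:ℝ), g p.2
        ∂((volume : Measure (EuclideanSpace ℝ (Fin d))).toSphere.prod (Measure.volumeIoiPow (Module.finrank ℝ V - 1))) =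
      (volume : Measure (EuclideanSpace ℝ (Fin d))).toSphere Set.univ *
        ∫⁻ r : Set.Ioi (0:ℝ), g r ∂(Measure.volumeIoiPow (d - 1)) := by
    rw [hdim, lintegral_prod (fun p : sphere (0:V) 1 × Set.Ioi (0:ℝ) => g p.2)
      ((hg.comp (measurable_subtype_coe.comp measurable_snd)).aemeasurable)]
    simp [lintegral_const, mul_comm]
  have step4 : ∫⁻ r : Set.Ioi (0:ℝ), g r ∂(Measure.volumeIoiPow (d - 1)) =
      ∫⁻ r in Set.Ioi (0:ℝ), ENNReal.ofReal (r ^ (d-1)) * g r := by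
    rw [Measure.volumeIoiPow,
      lintegral_withDensity_eq_lintegral_mul _
        ((measurable_subtype_coe.pow_const _).ennreal_ofReal)
        (g := fun r : Set.Ioi (0:ℝ) => g r)
        (hg.comp measurable_subtype_coe)]
    rw [← lintegral_subtype_comap measurableSet_Ioi
      (fun r : ℝ => ENNReal.ofReal (r ^ (d-1)) * g r)]
    exact lintegral_congr fun r => rfl
  rw [step1, step2, step3, step4]

lemma log_lint {S : ℝ} (hS : 0 ≤ S) :
    ∫⁻ r in Set.Ioc 0 S, ENNReal.ofReal ((1+r)⁻¹) = ENNReal.ofReal (Real.log (1+S)) := by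
  have hcont : ContinuousOn (fun r : ℝ => (1+r)⁻¹) (Set.Icc 0 S) := by
    apply ContinuousOn.inv₀ (by fun_prop)
    intro r hr; nlinarith [hr.1]
  have hInt : IntegrableOn (fun r : ℝ => (1+r)⁻¹) (Set.Ioc 0 S) volume :=
    (hcont.integrableOn_compact isCompact_Icc).mono_set Set.Ioc_subset_Icc_self
  rw [← ofReal_integral_eq_lintegral_ofReal hInt ?hnn]
  case hnn =>
    filter_upwards [ae_restrict_mem measurableSet_Ioc] with r hr
    have : (0:ℝ) < 1 + r := by nlinarith [hr.1]
    positivity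
  congr 1
  have h1 : ∫ r in Set.Ioc 0 S, (1+r)⁻¹ = ∫ r in (0:ℝ)..S, (1+r)⁻¹ :=
    (intervalIntegral.integral_of_le hS).symm
  rw [h1]
  have hderiv : ∀ r ∈ Set.uIcc (0:ℝ) S, HasDerivAt (fun r => Real.log (1+r)) ((1+r)⁻¹) r := by
    intro r hr
    rw [Set.uIcc_of_le hS] at hr
    have h0 : (0:ℝ) < 1 + r := by nlinarith [hr.1]
    simpa using ((hasDerivAt_id r).const_add (1:ℝ)).log h0.ne'
  rw [intervalIntegral.integral_eq_sub_of_hasDerivAt hderiv ?hint]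
  case hint =>
    apply ContinuousOn.intervalIntegrable
    rwa [Set.uIcc_of_le hS]
  simp

lemma tail_lint {S a : ℝ} (hS : 1 ≤ S) (ha : 1 ≤ a) :
    ∫⁻ r in Set.Ici S, ENNReal.ofReal (r ^ (-(a+1))) ≤ ENNReal.ofReal (S ^ (-a)) := by
  have hS0 : (0:ℝ) < S := by linarith
  have hlt : -(a+1) < -1 := by linarith
  rw [Measure.restrict_congr_set MeasureTheory.Ioi_ae_eq_Ici.symm,
    ← ofReal_integral_eq_lintegral_ofReal (integrableOn_Ioi_rpow_of_lt hlt hS0) ?hnn]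
  case hnn =>
    filter_upwards [ae_restrict_mem measurableSet_Ioi] with r hr
    exact Real.rpow_nonneg (le_of_lt (hS0.trans hr)) _
  apply ENNReal.ofReal_le_ofReal
  rw [integral_Ioi_rpow_of_lt hlt hS0, show -(a+1)+1 = -a by ring, neg_div_neg_eq]
  exact div_le_self (Real.rpow_nonneg hS0.le _) ha

lemma rpow_neg_anti {u v c : ℝ} (hc : 0 ≤ c) (hv : 0 < v) (h : v ≤ u) : u ^ (-c) ≤ v ^ (-c) := by
  rw [Real.rpow_neg (hv.trans_le h).le, Real.rpow_neg hv.le]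
  exact inv_anti₀ (Real.rpow_pos_of_pos hv c) (Real.rpow_le_rpow hv.le h hc)

lemma half_rpow {R c u : ℝ} (hc : 0 ≤ c) (hR : 0 ≤ R) (h : (1+R)/2 ≤ u) :
    u ^ (-c) ≤ 2 ^ c * (1+R) ^ (-c) := by
  have h1 : (0:ℝ) < (1+R)/2 := by linarith
  calc u ^ (-c) ≤ ((1+R)/2) ^ (-c) := rpow_neg_anti hc h1 h
    _ = 2 ^ c * (1+R) ^ (-c) := by
        rw [Real.div_rpow (by linarith) (by norm_num), Real.rpow_neg (by norm_num : (0:ℝ) ≤ 2),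
          div_eq_mul_inv, inv_inv, mul_comm]

lemma ball_bound (d : ℕ) (hd : 1 ≤ d) {b S : ℝ} (hb1 : 1 ≤ b) (hbd : b ≤ d) (hS : 0 ≤ S) :
    ∫⁻ t : EuclideanSpace ℝ (Fin d),
        (Metric.closedBall (0 : EuclideanSpace ℝ (Fin d)) S).indicator
          (fun t => ENNReal.ofReal ((1+‖t‖) ^ (-b))) t ≤
      (volume : Measure (EuclideanSpace ℝ (Fin d))).toSphere Set.univ *
        (ENNReal.ofReal ((1+S) ^ ((d:ℝ)-b)) * ENNReal.ofReal (Real.log (1+S))) := by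
  set G : ℝ → ℝ≥0∞ := fun r => (Set.Iic S).indicator (fun r => ENNReal.ofReal ((1+r) ^ (-b))) r
    with hG
  have hmb : Measurable fun r : ℝ => ENNReal.ofReal ((1+r) ^ (-b)) := by fun_prop
  have hmeasG : Measurable G := hmb.indicator measurableSet_Iic
  have hpt : ∀ t : EuclideanSpace ℝ (Fin d),
      (Metric.closedBall (0 : EuclideanSpace ℝ (Fin d)) S).indicator
        (fun t => ENNReal.ofReal ((1+‖t‖) ^ (-b))) t = G ‖t‖ := by
    intro t
    by_cases h : ‖t‖ ≤ S
    · rw [Set.indicator_of_mem (mem_closedBall_zero_iff.mpr h)]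
      simp only [G]
      rw [Set.indicator_of_mem (Set.mem_Iic.mpr h)]
    · rw [Set.indicator_of_notMem (fun hc => h (mem_closedBall_zero_iff.mp hc))]
      simp only [G]
      rw [Set.indicator_of_notMem (fun hc => h (Set.mem_Iic.mp hc))]
  rw [lintegral_congr hpt, polar_lintegral d hd G hmeasG]
  refine mul_le_mul_right ?_ _
  have hpt2 : ∀ r : ℝ, ENNReal.ofReal (r ^ (d-1)) * G r =
      (Set.Iic S).indicator
        (fun r => ENNReal.ofReal (r ^ (d-1)) * ENNReal.ofReal ((1+r) ^ (-b))) r := by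
    intro r
    by_cases h : r ∈ Set.Iic S
    · rw [Set.indicator_of_mem h]
      simp only [G]
      rw [Set.indicator_of_mem h]
    · rw [Set.indicator_of_notMem h]
      simp only [G]
      rw [Set.indicator_of_notMem h, mul_zero]
  rw [lintegral_congr_ae (Filter.Eventually.of_forall hpt2), lintegral_indicator measurableSet_Iic,
    Measure.restrict_restrict measurableSet_Iic, Set.inter_comm, Set.Ioi_inter_Iic]
  calc ∫⁻ r in Set.Ioc 0 S, ENNReal.ofReal (r ^ (d-1)) * ENNReal.ofReal ((1+r) ^ (-b))
      ≤ ∫⁻ r in Set.Ioc 0 S,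
          ENNReal.ofReal ((1+S) ^ ((d:ℝ)-b)) * ENNReal.ofReal ((1+r)⁻¹) := by
        apply setLIntegral_mono (by fun_prop)
        intro r hr
        have hr0 : (0:ℝ) < r := hr.1
        have hr1 : (0:ℝ) < 1 + r := by linarith
        rw [← ENNReal.ofReal_mul (by positivity), ← ENNReal.ofReal_mul (by positivity)]
        apply ENNReal.ofReal_le_ofReal
        have h1 : r ^ (d-1) ≤ (1+r) ^ (d-1) := pow_le_pow_left₀ hr0.le (by linarith) _
        have h2 : ((1+r) : ℝ) ^ (d-1 : ℕ) = (1+r) ^ ((d:ℝ)-1) := by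
          rw [← Real.rpow_natCast (1+r) (d-1), Nat.cast_sub hd, Nat.cast_one]
        have h3 : (1+r) ^ ((d:ℝ)-1) * (1+r) ^ (-b) = (1+r) ^ ((d:ℝ)-b) * (1+r)⁻¹ := by
          rw [← Real.rpow_add hr1, ← Real.rpow_neg_one (1+r), ← Real.rpow_add hr1]
          ring_nf
        have h4 : (1+r) ^ ((d:ℝ)-b) ≤ (1+S) ^ ((d:ℝ)-b) :=
          Real.rpow_le_rpow (by linarith) (by linarith [hr.2]) (by linarith)
        have h5 : (0:ℝ) ≤ (1+r) ^ (-b) := Real.rpow_nonneg hr1.le _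
        calc r ^ (d-1) * (1+r) ^ (-b) ≤ (1+r) ^ ((d:ℝ)-1) * (1+r) ^ (-b) := by
              rw [← h2]; exact mul_le_mul_of_nonneg_right h1 h5
          _ = (1+r) ^ ((d:ℝ)-b) * (1+r)⁻¹ := h3
          _ ≤ (1+S) ^ ((d:ℝ)-b) * (1+r)⁻¹ := by
              exact mul_le_mul_of_nonneg_right h4 (by positivity)
    _ = ENNReal.ofReal ((1+S) ^ ((d:ℝ)-b)) * ∫⁻ r in Set.Ioc 0 S, ENNReal.ofReal ((1+r)⁻¹) :=
        lintegral_const_mul _ (by fun_prop)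
    _ = ENNReal.ofReal ((1+S) ^ ((d:ℝ)-b)) * ENNReal.ofReal (Real.log (1+S)) := by
        rw [log_lint hS]

lemma tail_bound (d : ℕ) (hd : 1 ≤ d) {a S : ℝ} (ha : 1 ≤ a) (hS : 1 ≤ S) :
    ∫⁻ t : EuclideanSpace ℝ (Fin d),
        ({t : EuclideanSpace ℝ (Fin d) | S ≤ ‖t‖}).indicator
          (fun t => ENNReal.ofReal ((1+‖t‖) ^ (-((d:ℝ)+a)))) t ≤
      (volume : Measure (EuclideanSpace ℝ (Fin d))).toSphere Set.univ *
        ENNReal.ofReal (S ^ (-a)) := by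
  set G : ℝ → ℝ≥0∞ :=
    fun r => (Set.Ici S).indicator (fun r => ENNReal.ofReal ((1+r) ^ (-((d:ℝ)+a)))) r with hG
  have hmb : Measurable fun r : ℝ => ENNReal.ofReal ((1+r) ^ (-((d:ℝ)+a))) := by fun_prop
  have hmeasG : Measurable G := hmb.indicator measurableSet_Ici
  have hpt : ∀ t : EuclideanSpace ℝ (Fin d),
      ({t : EuclideanSpace ℝ (Fin d) | S ≤ ‖t‖}).indicator
        (fun t => ENNReal.ofReal ((1+‖t‖) ^ (-((d:ℝ)+a)))) t = G ‖t‖ := by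
    intro t
    by_cases h : S ≤ ‖t‖
    · rw [Set.indicator_of_mem (show t ∈ {t : EuclideanSpace ℝ (Fin d) | S ≤ ‖t‖} from h)]
      simp only [G]
      rw [Set.indicator_of_mem (Set.mem_Ici.mpr h)]
    · rw [Set.indicator_of_notMem
        (show t ∉ {t : EuclideanSpace ℝ (Fin d) | S ≤ ‖t‖} from h)]
      simp only [G]
      rw [Set.indicator_of_notMem (fun hc => h (Set.mem_Ici.mp hc))]
  rw [lintegral_congr hpt, polar_lintegral d hd G hmeasG]
  refine mul_le_mul_right ?_ _
  have hpt2 : ∀ r : ℝ, ENNReal.ofReal (r ^ (d-1)) * G r =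
      (Set.Ici S).indicator
        (fun r => ENNReal.ofReal (r ^ (d-1)) * ENNReal.ofReal ((1+r) ^ (-((d:ℝ)+a)))) r := by
    intro r
    by_cases h : r ∈ Set.Ici S
    · rw [Set.indicator_of_mem h]
      simp only [G]
      rw [Set.indicator_of_mem h]
    · rw [Set.indicator_of_notMem h]
      simp only [G]
      rw [Set.indicator_of_notMem h, mul_zero]
  rw [lintegral_congr_ae (Filter.Eventually.of_forall hpt2), lintegral_indicator measurableSet_Ici,
    Measure.restrict_restrict measurableSet_Ici,
    show Set.Ici S ∩ Set.Ioi 0 = Set.Ici S from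
      Set.inter_eq_left.mpr (fun r hr => lt_of_lt_of_le (by linarith : (0:ℝ) < S) hr)]
  calc ∫⁻ r in Set.Ici S, ENNReal.ofReal (r ^ (d-1)) * ENNReal.ofReal ((1+r) ^ (-((d:ℝ)+a)))
      ≤ ∫⁻ r in Set.Ici S, ENNReal.ofReal (r ^ (-(a+1))) := by
        apply setLIntegral_mono (by fun_prop)
        intro r hr
        have hr0 : (0:ℝ) < r := lt_of_lt_of_le (by linarith) hr
        have hr1 : (0:ℝ) < 1 + r := by linarith
        rw [← ENNReal.ofReal_mul (by positivity)]
        apply ENNReal.ofReal_le_ofReal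
        have h1 : r ^ (d-1) ≤ (1+r) ^ (d-1) := pow_le_pow_left₀ hr0.le (by linarith) _
        have h2 : ((1+r) : ℝ) ^ (d-1 : ℕ) = (1+r) ^ ((d:ℝ)-1) := by
          rw [← Real.rpow_natCast (1+r) (d-1), Nat.cast_sub hd, Nat.cast_one]
        have h3 : (1+r) ^ ((d:ℝ)-1) * (1+r) ^ (-((d:ℝ)+a)) = (1+r) ^ (-(a+1)) := by
          rw [← Real.rpow_add hr1]; ring_nf
        have h5 : (0:ℝ) ≤ (1+r) ^ (-((d:ℝ)+a)) := Real.rpow_nonneg hr1.le _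
        calc r ^ (d-1) * (1+r) ^ (-((d:ℝ)+a))
            ≤ (1+r) ^ ((d:ℝ)-1) * (1+r) ^ (-((d:ℝ)+a)) := by
              rw [← h2]; exact mul_le_mul_of_nonneg_right h1 h5
          _ = (1+r) ^ (-(a+1)) := h3
          _ ≤ r ^ (-(a+1)) := rpow_neg_anti (by linarith) hr0 (by linarith)
    _ ≤ ENNReal.ofReal (S ^ (-a)) := tail_lint hS ha

lemma div_rpow_bound {k c u v : ℝ} (hc : 0 ≤ c) (hk : 0 < k) (hv : 0 < v) (h : v/k ≤ u) :
    u ^ (-c) ≤ k ^ c * v ^ (-c) := by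
  have h1 : (0:ℝ) < v/k := by positivity
  calc u ^ (-c) ≤ (v/k) ^ (-c) := rpow_neg_anti hc h1 h
    _ = k ^ c * v ^ (-c) := by
        rw [Real.div_rpow hv.le hk.le, Real.rpow_neg hk.le, div_eq_mul_inv, inv_inv, mul_comm]

set_option maxHeartbeats 1000000 in
lemma master (d : ℕ) (hd : 3 ≤ d) {a : ℝ} (had : (d:ℝ) - 1 ≤ a) (haD : a ≤ d)
    (x : EuclideanSpace ℝ (Fin d)) (hx : 2 ≤ ‖x‖) :
    ∫⁻ t : EuclideanSpace ℝ (Fin d),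
        ENNReal.ofReal ((1+‖t‖) ^ (-(d:ℝ))) * ENNReal.ofReal ((1+‖x - t‖) ^ (-a)) ≤
      (volume : Measure (EuclideanSpace ℝ (Fin d))).toSphere Set.univ *
        ENNReal.ofReal (((2:ℝ)^(d+2) + 2 * 12^d) * (Real.log ‖x‖ * (1+‖x‖) ^ (-a))) := by
  have hd1 : 1 ≤ d := by omega
  have hdR : (3:ℝ) ≤ (d:ℝ) := by exact_mod_cast hd
  have h2a : 2 ≤ a := by linarith
  have ha0 : 0 ≤ a := by linarith
  set R := ‖x‖ with hR
  set S := R/2 with hSdef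
  have hS1 : 1 ≤ S := by rw [hSdef]; linarith
  have hS0 : 0 ≤ S := by linarith
  have hR0 : 0 ≤ R := by linarith
  have h1R : (0:ℝ) < 1 + R := by linarith
  set κ := (volume : Measure (EuclideanSpace ℝ (Fin d))).toSphere Set.univ with hκ
  set A : EuclideanSpace ℝ (Fin d) → ℝ≥0∞ := fun t =>
    (Metric.closedBall (0:EuclideanSpace ℝ (Fin d)) S).indicator (fun t => ENNReal.ofReal ((1+‖t‖) ^ (-(d:ℝ)))) t with hA
  set B : EuclideanSpace ℝ (Fin d) → ℝ≥0∞ := fun t =>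
    (Metric.closedBall x S).indicator (fun t => ENNReal.ofReal ((1+‖x - t‖) ^ (-a))) t with hB
  set Q : EuclideanSpace ℝ (Fin d) → ℝ≥0∞ := fun t =>
    ({t : EuclideanSpace ℝ (Fin d) | S ≤ ‖t‖}).indicator (fun t => ENNReal.ofReal ((1+‖t‖) ^ (-((d:ℝ)+a)))) t with hQ
  set cA : ℝ := 2^a * (1+R)^(-a) with hcA
  set cB : ℝ := 2^((d:ℝ)) * (1+R)^(-(d:ℝ)) with hcB
  set cQ : ℝ := 3^a with hcQ
  have hmA : Measurable A := (by fun_prop : Measurable fun t : EuclideanSpace ℝ (Fin d) =>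
      ENNReal.ofReal ((1+‖t‖) ^ (-(d:ℝ)))).indicator measurableSet_closedBall
  have hmB : Measurable B := by
    apply Measurable.indicator _ measurableSet_closedBall
    fun_prop
  have hmQ : Measurable Q := by
    apply Measurable.indicator _ (measurableSet_le measurable_const measurable_norm)
    fun_prop
  -- pointwise bound
  have hpt : ∀ t : EuclideanSpace ℝ (Fin d), ENNReal.ofReal ((1+‖t‖) ^ (-(d:ℝ))) * ENNReal.ofReal ((1+‖x - t‖) ^ (-a)) ≤
      ENNReal.ofReal cA * A t + (ENNReal.ofReal cB * B t + ENNReal.ofReal cQ * Q t) := by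
    intro t
    have hnt : (0:ℝ) ≤ ‖t‖ := norm_nonneg t
    have hns : (0:ℝ) ≤ ‖x - t‖ := norm_nonneg _
    have h1t : (0:ℝ) < 1 + ‖t‖ := by linarith
    have h1s : (0:ℝ) < 1 + ‖x - t‖ := by linarith
    by_cases h1 : ‖t‖ ≤ S
    · -- region A
      have hxt : S ≤ ‖x - t‖ := by
        have h' : R - ‖t‖ ≤ ‖x - t‖ := by
          have h := norm_sub_norm_le x t
          rw [hR]; linarith
        rw [hSdef] at h1 ⊢; linarith
      have key : (1+‖x - t‖) ^ (-a) ≤ cA :=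
        div_rpow_bound ha0 (by norm_num) h1R (by rw [hSdef] at hxt; linarith)
      refine le_trans ?_ (le_add_right le_rfl)
      have hAt : A t = ENNReal.ofReal ((1+‖t‖) ^ (-(d:ℝ))) := by
        simp only [A]; rw [Set.indicator_of_mem (mem_closedBall_zero_iff.mpr h1)]
      rw [hAt, mul_comm (ENNReal.ofReal cA)]
      exact mul_le_mul_right (ENNReal.ofReal_le_ofReal key) _
    · by_cases h2 : ‖x - t‖ ≤ S
      · -- region B
        have hxt : S ≤ ‖t‖ := by
          have h : R ≤ ‖x - t‖ + ‖t‖ := by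
            calc R = ‖x - t + t‖ := by rw [hR, sub_add_cancel]
              _ ≤ ‖x - t‖ + ‖t‖ := norm_add_le _ _
          rw [hSdef] at h2 ⊢; linarith
        have key : (1+‖t‖) ^ (-(d:ℝ)) ≤ cB :=
          div_rpow_bound (by linarith) (by norm_num) h1R (by rw [hSdef] at hxt; linarith)
        refine le_trans ?_ (le_add_left (le_add_right le_rfl))
        have hBt : B t = ENNReal.ofReal ((1+‖x - t‖) ^ (-a)) := by
          simp only [B]
          rw [Set.indicator_of_mem]
          rw [Metric.mem_closedBall, dist_eq_norm, norm_sub_rev]; exact h2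
        rw [hBt]
        exact mul_le_mul_left (ENNReal.ofReal_le_ofReal key) _
      · -- region Q
        push_neg at h1 h2
        have hts : 1 + ‖t‖ ≤ 3 * (1+‖x - t‖) := by
          have h : ‖t‖ ≤ ‖x - t‖ + R := by
            calc ‖t‖ = ‖x - (x - t)‖ := by rw [sub_sub_cancel]
              _ ≤ ‖x‖ + ‖x - t‖ := norm_sub_le _ _
              _ = ‖x - t‖ + R := by rw [hR]; ring
          rw [hSdef] at h2; linarith
        have key : (1+‖x - t‖) ^ (-a) ≤ cQ * (1+‖t‖) ^ (-a) :=
          div_rpow_bound ha0 (by norm_num) h1t (by linarith)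
        have hQt : Q t = ENNReal.ofReal ((1+‖t‖) ^ (-((d:ℝ)+a))) := by
          simp only [Q]
          rw [Set.indicator_of_mem (show t ∈ {t : EuclideanSpace ℝ (Fin d) | S ≤ ‖t‖} from h1.le)]
        refine le_trans ?_ (le_add_left (le_add_left le_rfl))
        rw [hQt]
        calc ENNReal.ofReal ((1+‖t‖) ^ (-(d:ℝ))) * ENNReal.ofReal ((1+‖x - t‖) ^ (-a))
            ≤ ENNReal.ofReal ((1+‖t‖) ^ (-(d:ℝ))) * ENNReal.ofReal (cQ * (1+‖t‖) ^ (-a)) :=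
              mul_le_mul_right (ENNReal.ofReal_le_ofReal key) _
          _ = ENNReal.ofReal cQ * ENNReal.ofReal ((1+‖t‖) ^ (-((d:ℝ)+a))) := by
              rw [ENNReal.ofReal_mul (by positivity), ← mul_assoc,
                mul_comm (ENNReal.ofReal ((1+‖t‖) ^ (-(d:ℝ)))) (ENNReal.ofReal cQ), mul_assoc,
                ← ENNReal.ofReal_mul (Real.rpow_nonneg h1t.le _), ← Real.rpow_add h1t]
              ring_nf
  calc ∫⁻ t : EuclideanSpace ℝ (Fin d), ENNReal.ofReal ((1+‖t‖) ^ (-(d:ℝ))) * ENNReal.ofReal ((1+‖x - t‖) ^ (-a))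
      ≤ ∫⁻ t : EuclideanSpace ℝ (Fin d), (ENNReal.ofReal cA * A t + (ENNReal.ofReal cB * B t + ENNReal.ofReal cQ * Q t)) :=
        lintegral_mono hpt
    _ = ENNReal.ofReal cA * (∫⁻ t, A t) +
        (ENNReal.ofReal cB * (∫⁻ t, B t) + ENNReal.ofReal cQ * (∫⁻ t, Q t)) := by
        rw [lintegral_add_left (hmA.const_mul _), lintegral_add_left (hmB.const_mul _),
          lintegral_const_mul _ hmA, lintegral_const_mul _ hmB, lintegral_const_mul _ hmQ]
    _ ≤ ENNReal.ofReal cA * (κ * (ENNReal.ofReal ((1+S) ^ ((d:ℝ)-(d:ℝ))) * ENNReal.ofReal (Real.log (1+S)))) +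
        (ENNReal.ofReal cB * (κ * (ENNReal.ofReal ((1+S) ^ ((d:ℝ)-a)) * ENNReal.ofReal (Real.log (1+S)))) +
         ENNReal.ofReal cQ * (κ * ENNReal.ofReal (S ^ (-a)))) := by
        clear hpt
        have hIA : (∫⁻ t, A t) ≤ κ * (ENNReal.ofReal ((1+S) ^ ((d:ℝ)-(d:ℝ))) * ENNReal.ofReal (Real.log (1+S))) :=
          ball_bound d hd1 (by linarith : (1:ℝ) ≤ (d:ℝ)) le_rfl hS0
        have hIB : (∫⁻ t, B t) ≤ κ * (ENNReal.ofReal ((1+S) ^ ((d:ℝ)-a)) * ENNReal.ofReal (Real.log (1+S))) := by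
          have htr : (∫⁻ t, B t) = ∫⁻ y : EuclideanSpace ℝ (Fin d),
              (Metric.closedBall (0:EuclideanSpace ℝ (Fin d)) S).indicator (fun y => ENNReal.ofReal ((1+‖y‖) ^ (-a))) y := by
            have hBH : ∀ t : EuclideanSpace ℝ (Fin d), B t =
                (Metric.closedBall (0:EuclideanSpace ℝ (Fin d)) S).indicator (fun y => ENNReal.ofReal ((1+‖y‖) ^ (-a))) (x - t) := by
              intro t
              by_cases h : ‖x - t‖ ≤ S
              · simp only [B]
                rw [Set.indicator_of_mem (mem_closedBall_zero_iff.mpr h),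
                  Set.indicator_of_mem (by rw [Metric.mem_closedBall, dist_eq_norm, norm_sub_rev]; exact h)]
              · simp only [B]
                rw [Set.indicator_of_notMem (fun hc => h (mem_closedBall_zero_iff.mp hc)),
                  Set.indicator_of_notMem
                    (fun hc => h (by rw [Metric.mem_closedBall, dist_eq_norm, norm_sub_rev] at hc; exact hc))]
            rw [lintegral_congr hBH]
            exact (Measure.measurePreserving_sub_left volume x).lintegral_comp
              ((by fun_prop : Measurable fun y : EuclideanSpace ℝ (Fin d) => ENNReal.ofReal ((1+‖y‖) ^ (-a))).indicator
                measurableSet_closedBall)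
          rw [htr]
          exact ball_bound d hd1 (by linarith : (1:ℝ) ≤ a) haD hS0
        have hIQ : (∫⁻ t, Q t) ≤ κ * ENNReal.ofReal (S ^ (-a)) :=
          tail_bound d hd1 (by linarith : (1:ℝ) ≤ a) hS1
        exact add_le_add (mul_le_mul_right hIA _)
          (add_le_add (mul_le_mul_right hIB _) (mul_le_mul_right hIQ _))
    _ ≤ κ * ENNReal.ofReal (((2:ℝ)^(d+2) + 2 * 12^d) * (Real.log R * (1+R) ^ (-a))) := by
        -- collapse to κ * ofReal of a real expression and finish with real arithmetic
        have hlogS0 : 0 ≤ Real.log (1+S) := Real.log_nonneg (by linarith)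
        have hcA0 : 0 ≤ cA := by rw [hcA]; positivity
        have hcB0 : 0 ≤ cB := by rw [hcB]; positivity
        have hcQ0 : 0 ≤ cQ := by rw [hcQ]; positivity
        have hu10 : 0 ≤ (1+S) ^ ((d:ℝ)-(d:ℝ)) := Real.rpow_nonneg (by linarith) _
        have hu20 : 0 ≤ (1+S) ^ ((d:ℝ)-a) := Real.rpow_nonneg (by linarith) _
        have e1 : ENNReal.ofReal cA * (κ * (ENNReal.ofReal ((1+S) ^ ((d:ℝ)-(d:ℝ))) * ENNReal.ofReal (Real.log (1+S)))) =
            κ * ENNReal.ofReal (cA * ((1+S) ^ ((d:ℝ)-(d:ℝ)) * Real.log (1+S))) := by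
          rw [ENNReal.ofReal_mul hcA0, ENNReal.ofReal_mul hu10]
          ring
        have e2 : ENNReal.ofReal cB * (κ * (ENNReal.ofReal ((1+S) ^ ((d:ℝ)-a)) * ENNReal.ofReal (Real.log (1+S)))) =
            κ * ENNReal.ofReal (cB * ((1+S) ^ ((d:ℝ)-a) * Real.log (1+S))) := by
          rw [ENNReal.ofReal_mul hcB0, ENNReal.ofReal_mul hu20]
          ring
        have e3 : ENNReal.ofReal cQ * (κ * ENNReal.ofReal (S ^ (-a))) =
            κ * ENNReal.ofReal (cQ * S ^ (-a)) := by
          rw [ENNReal.ofReal_mul hcQ0]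
          ring
        rw [e1, e2, e3, ← mul_add, ← mul_add,
          ← ENNReal.ofReal_add (by positivity) (by positivity),
          ← ENNReal.ofReal_add (by positivity) (by positivity)]
        apply mul_le_mul_right
        apply ENNReal.ofReal_le_ofReal
        -- pure real arithmetic
        set L := Real.log R with hL
        set P := (1+R) ^ (-a) with hP
        have hP0 : 0 ≤ P := Real.rpow_nonneg h1R.le _
        have hLhalf : (1:ℝ)/2 ≤ L := by
          have h2 : Real.log 2 ≤ L := Real.log_le_log (by norm_num) hx
          have := Real.log_two_gt_d9
          linarith
        have hlog1S : Real.log (1+S) ≤ 2 * L := by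
          have hstep : Real.log (1+S) ≤ Real.log (1+R) :=
            Real.log_le_log (by linarith) (by rw [hSdef]; linarith)
          have hstep2 : Real.log (1+R) ≤ Real.log (R^2) :=
            Real.log_le_log (by linarith) (by nlinarith)
          rw [Real.log_pow] at hstep2
          push_cast at hstep2
          linarith
        have hpow2 : (2:ℝ)^a ≤ 2^(d:ℝ) := Real.rpow_le_rpow_of_exponent_le (by norm_num) haD
        have hpow2' : (2:ℝ)^((d:ℝ)) = 2^(d:ℕ) := by rw [Real.rpow_natCast]
        have hpow12 : (3:ℝ)^a * 4^a ≤ 12^(d:ℕ) := by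
          rw [← Real.mul_rpow (by norm_num) (by norm_num)]
          norm_num
          calc (12:ℝ)^a ≤ 12^(d:ℝ) := Real.rpow_le_rpow_of_exponent_le (by norm_num) haD
            _ = 12^(d:ℕ) := Real.rpow_natCast 12 d
        -- term 1
        have ht1 : cA * ((1+S) ^ ((d:ℝ)-(d:ℝ)) * Real.log (1+S)) ≤ 2^(d:ℕ) * (2*L) * P := by
          rw [sub_self, Real.rpow_zero, one_mul, hcA]
          have hlognn : 0 ≤ Real.log (1+S) := Real.log_nonneg (by linarith)
          calc 2^a * (1+R)^(-a) * Real.log (1+S) ≤ 2^(d:ℕ) * (1+R)^(-a) * (2*L) := by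
                apply mul_le_mul (mul_le_mul_of_nonneg_right (hpow2'.symm ▸ hpow2) hP0) hlog1S hlognn
                positivity
            _ = 2^(d:ℕ) * (2*L) * P := by rw [hP]; ring
        -- term 2
        have ht2 : cB * ((1+S) ^ ((d:ℝ)-a) * Real.log (1+S)) ≤ 2^(d:ℕ) * (2*L) * P := by
          rw [hcB]
          have hlognn : 0 ≤ Real.log (1+S) := Real.log_nonneg (by linarith)
          have hSexp : (1+S) ^ ((d:ℝ)-a) ≤ (1+R) ^ ((d:ℝ)-a) :=
            Real.rpow_le_rpow (by linarith) (by rw [hSdef]; linarith) (by linarith)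
          have hcomb : (1+R)^(-(d:ℝ)) * (1+R) ^ ((d:ℝ)-a) = P := by
            rw [hP, ← Real.rpow_add h1R]; ring_nf
          calc 2^((d:ℝ)) * (1+R)^(-(d:ℝ)) * ((1+S) ^ ((d:ℝ)-a) * Real.log (1+S))
              ≤ 2^((d:ℝ)) * (1+R)^(-(d:ℝ)) * ((1+R) ^ ((d:ℝ)-a) * (2*L)) := by
                apply mul_le_mul_of_nonneg_left (mul_le_mul hSexp hlog1S hlognn (by positivity))
                positivity
            _ = 2^(d:ℕ) * (2*L) * P := by rw [← hcomb, hpow2']; ring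
        -- term 3
        have ht3 : cQ * S ^ (-a) ≤ 12^(d:ℕ) * (2*L) * P := by
          rw [hcQ]
          have hS4 : S ^ (-a) ≤ 4^a * P := by
            rw [hP]
            exact div_rpow_bound ha0 (by norm_num) h1R (by rw [hSdef]; linarith)
          have h3a : (0:ℝ) ≤ 3^a := by positivity
          calc 3^a * S^(-a) ≤ 3^a * (4^a * P) := mul_le_mul_of_nonneg_left hS4 h3a
            _ = (3^a * 4^a) * P := by ring
            _ ≤ 12^(d:ℕ) * P := mul_le_mul_of_nonneg_right hpow12 hP0
            _ = 12^(d:ℕ) * P * 1 := by ring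
            _ ≤ 12^(d:ℕ) * P * (2*L) := by
                apply mul_le_mul_of_nonneg_left (by linarith) (by positivity)
            _ = 12^(d:ℕ) * (2*L) * P := by ring
        have hfin : ((2:ℝ)^(d+2) + 2 * 12^d) * (L * P) =
            2^(d:ℕ) * (2*L) * P + 2^(d:ℕ) * (2*L) * P + 12^(d:ℕ) * (2*L) * P := by
          rw [pow_add]; ring
        rw [hfin]
        linarith

set_option maxHeartbeats 1000000 in
/-- Critical convolution decay estimate with logarithmic loss:
if `|∂^α E(x)| ≤ C(1+|x|)^{−(|α|+d−1)}` for `|α| ≤ 1` and `|f(x)| ≤ M(1+|x|)^{−d}`,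
then for `|α| ≤ 1` and `|x| ≥ 2`,
`|(∂^α E ∗ f)(x)| ≤ C' (log|x|) (1+|x|)^{−(|α|+d−1)} M`. -/
theorem convolution_kernel_decay_log (d : ℕ) (hd : 3 ≤ d)
    (E : EuclideanSpace ℝ (Fin d) → ℝ) (C : ℝ) (hC : 0 < C)
    (hE : ContDiff ℝ 1 E)
    (hEbound : ∀ n ≤ 1, ∀ x : EuclideanSpace ℝ (Fin d),
      ‖iteratedFDeriv ℝ n E x‖ ≤ C * (1 + ‖x‖) ^ (-((n : ℝ) + d - 1))) :
    ∃ C' : ℝ, 0 < C' ∧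
      ∀ (f : EuclideanSpace ℝ (Fin d) → ℝ) (M : ℝ),
        Measurable f →
        (∀ x, |f x| ≤ M * (1 + ‖x‖) ^ (-(d : ℝ))) →
        ∀ n ≤ 1, ∀ x : EuclideanSpace ℝ (Fin d), 2 ≤ ‖x‖ →
          ‖MeasureTheory.convolution f (iteratedFDeriv ℝ n E)
              (ContinuousLinearMap.lsmul ℝ ℝ) volume x‖ ≤
            C' * Real.log ‖x‖ * (1 + ‖x‖) ^ (-((n : ℝ) + d - 1)) * M := by
  set κ := (volume : Measure (EuclideanSpace ℝ (Fin d))).toSphere Set.univ with hκ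
  have hκfin : κ ≠ ⊤ := measure_ne_top _ _
  have hκ0 : (0:ℝ) ≤ κ.toReal := ENNReal.toReal_nonneg
  set K : ℝ := (2:ℝ)^(d+2) + 2 * 12^d with hK
  have hK0 : 0 < K := by rw [hK]; positivity
  refine ⟨C * (κ.toReal + 1) * K, by positivity, ?_⟩
  intro f M hmf hfb n hn x hx
  set a : ℝ := (n : ℝ) + d - 1 with ha
  have had : (d:ℝ) - 1 ≤ a := by
    rw [ha]; have : (0:ℝ) ≤ (n:ℝ) := Nat.cast_nonneg n; linarith
  have haD : a ≤ d := by
    rw [ha]; have : (n:ℝ) ≤ 1 := by exact_mod_cast hn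
    linarith
  have hM0 : 0 ≤ M := by
    have h := hfb 0
    rw [norm_zero, add_zero, Real.one_rpow, mul_one] at h
    exact le_trans (abs_nonneg _) h
  set g := iteratedFDeriv ℝ n E with hg
  have hL0 : 0 ≤ Real.log ‖x‖ := Real.log_nonneg (by linarith)
  have hP0 : 0 ≤ (1 + ‖x‖) ^ (-a) := Real.rpow_nonneg (by positivity) _
  have hnorm : ‖MeasureTheory.convolution f g (ContinuousLinearMap.lsmul ℝ ℝ) volume x‖ ≤
      (∫⁻ t, ENNReal.ofReal ‖(ContinuousLinearMap.lsmul ℝ ℝ) (f t) (g (x - t))‖).toReal := by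
    rw [MeasureTheory.convolution_def]
    exact norm_integral_le_lintegral_norm _
  have hpt : ∀ t, ENNReal.ofReal ‖(ContinuousLinearMap.lsmul ℝ ℝ) (f t) (g (x - t))‖ ≤
      ENNReal.ofReal (M * C) *
        (ENNReal.ofReal ((1+‖t‖) ^ (-(d:ℝ))) * ENNReal.ofReal ((1+‖x - t‖) ^ (-a))) := by
    intro t
    have h1 : ‖(ContinuousLinearMap.lsmul ℝ ℝ) (f t) (g (x - t))‖ = |f t| * ‖g (x - t)‖ := by
      rw [ContinuousLinearMap.lsmul_apply, norm_smul, Real.norm_eq_abs]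
    have h2 : |f t| * ‖g (x - t)‖ ≤ (M * (1+‖t‖) ^ (-(d:ℝ))) * (C * (1+‖x - t‖) ^ (-a)) := by
      apply mul_le_mul (hfb t) _ (norm_nonneg _)
      · have := hfb t
        have h3 : (0:ℝ) ≤ (1+‖t‖) ^ (-(d:ℝ)) := Real.rpow_nonneg (by positivity) _
        nlinarith [abs_nonneg (f t)]
      · rw [ha]; exact hEbound n hn (x - t)
    rw [h1]
    calc ENNReal.ofReal (|f t| * ‖g (x - t)‖) ≤
        ENNReal.ofReal ((M * (1+‖t‖) ^ (-(d:ℝ))) * (C * (1+‖x - t‖) ^ (-a))) :=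
          ENNReal.ofReal_le_ofReal h2
      _ = ENNReal.ofReal (M * C) *
          (ENNReal.ofReal ((1+‖t‖) ^ (-(d:ℝ))) * ENNReal.ofReal ((1+‖x - t‖) ^ (-a))) := by
          rw [show (M * (1+‖t‖) ^ (-(d:ℝ))) * (C * (1+‖x - t‖) ^ (-a)) =
            (M * C) * ((1+‖t‖) ^ (-(d:ℝ)) * (1+‖x - t‖) ^ (-a)) from by ring,
            ENNReal.ofReal_mul (by positivity),
            ENNReal.ofReal_mul (Real.rpow_nonneg (by positivity) _)]
  have hI := master d hd had haD x hx
  calc ‖MeasureTheory.convolution f g (ContinuousLinearMap.lsmul ℝ ℝ) volume x‖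
      ≤ (∫⁻ t, ENNReal.ofReal ‖(ContinuousLinearMap.lsmul ℝ ℝ) (f t) (g (x - t))‖).toReal :=
        hnorm
    _ ≤ (ENNReal.ofReal (M * C) *
          (κ * ENNReal.ofReal (K * (Real.log ‖x‖ * (1+‖x‖) ^ (-a))))).toReal := by
        apply ENNReal.toReal_mono
        · exact ENNReal.mul_ne_top ENNReal.ofReal_ne_top
            (ENNReal.mul_ne_top hκfin ENNReal.ofReal_ne_top)
        · calc ∫⁻ t, ENNReal.ofReal ‖(ContinuousLinearMap.lsmul ℝ ℝ) (f t) (g (x - t))‖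
              ≤ ∫⁻ t, ENNReal.ofReal (M * C) *
                  (ENNReal.ofReal ((1+‖t‖) ^ (-(d:ℝ))) *
                    ENNReal.ofReal ((1+‖x - t‖) ^ (-a))) := lintegral_mono hpt
            _ = ENNReal.ofReal (M * C) *
                ∫⁻ t, ENNReal.ofReal ((1+‖t‖) ^ (-(d:ℝ))) *
                  ENNReal.ofReal ((1+‖x - t‖) ^ (-a)) :=
                lintegral_const_mul _ (by fun_prop)
            _ ≤ ENNReal.ofReal (M * C) *
                (κ * ENNReal.ofReal (K * (Real.log ‖x‖ * (1+‖x‖) ^ (-a)))) := by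
                exact mul_le_mul_right hI _
    _ ≤ C * (κ.toReal + 1) * K * Real.log ‖x‖ * (1+‖x‖) ^ (-a) * M := by
        rw [ENNReal.toReal_mul, ENNReal.toReal_mul,
          ENNReal.toReal_ofReal (by positivity),
          ENNReal.toReal_ofReal (by positivity)]
        calc (M * C) * (κ.toReal * (K * (Real.log ‖x‖ * (1+‖x‖) ^ (-a))))
            = (C * K * Real.log ‖x‖ * ((1+‖x‖) ^ (-a)) * M) * κ.toReal := by ring
          _ ≤ (C * K * Real.log ‖x‖ * ((1+‖x‖) ^ (-a)) * M) * (κ.toReal + 1) :=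
              mul_le_mul_of_nonneg_left (by linarith) (by positivity)
          _ = C * (κ.toReal + 1) * K * Real.log ‖x‖ * (1+‖x‖) ^ (-a) * M := by ring
end
end

section
/- Let ξ ∈ ℝ^d with 0 < |ξ| < 1/2 and set λ_±(ξ) = (−1 ± √(1−4|ξ|²))/2. Define the (d+1)×(d+1) matrices Π₀(ξ) = diag(0, I_d − ξξᵀ/|ξ|²) and Π_±(ξ) = ±(λ₊−λ₋)^{−1} [[−λ_∓, −iξᵀ],[−iξ, λ_± ξξᵀ/|ξ|²]]. Then Π₀ + Π₊ + Π₋ = I_{d+1}, Π_j Π_k = δ_{jk} Π_j for j,k ∈ {0,+,−}, and −Â_ξ Π_j = λ_j Π_j for each j, where Â_ξ = [[0, iξᵀ],[iξ, I_d]] and λ₀ = −1. -/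
noncomputable section

/-- The symbol `Â_ξ = [[0, iξᵀ],[iξ, I_d]]`. -/
def eulerDampingSymbol (d : ℕ) (ξ : EuclideanSpace ℝ (Fin d)) :
    Matrix (Unit ⊕ Fin d) (Unit ⊕ Fin d) ℂ :=
  Matrix.fromBlocks 0 (Matrix.of fun _ j => Complex.I * (ξ j : ℂ))
    (Matrix.of fun i _ => Complex.I * (ξ i : ℂ)) 1

/-- The eigenvalue `λ₊(ξ) = (−1 + √(1−4|ξ|²))/2`. -/
def lamPlus (d : ℕ) (ξ : EuclideanSpace ℝ (Fin d)) : ℂ :=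
  (-1 + (Real.sqrt (1 - 4 * ‖ξ‖ ^ 2) : ℂ)) / 2

/-- The eigenvalue `λ₋(ξ) = (−1 − √(1−4|ξ|²))/2`. -/
def lamMinus (d : ℕ) (ξ : EuclideanSpace ℝ (Fin d)) : ℂ :=
  (-1 - (Real.sqrt (1 - 4 * ‖ξ‖ ^ 2) : ℂ)) / 2

/-- The projection matrix `ξξᵀ/|ξ|²`. -/
def xiProj (d : ℕ) (ξ : EuclideanSpace ℝ (Fin d)) : Matrix (Fin d) (Fin d) ℂ :=
  Matrix.of fun i j => (ξ i : ℂ) * (ξ j : ℂ) / ((‖ξ‖ : ℂ) ^ 2)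

/-- The eigenprojection `Π₀(ξ) = diag(0, I_d − ξξᵀ/|ξ|²)`. -/
def Pi0 (d : ℕ) (ξ : EuclideanSpace ℝ (Fin d)) : Matrix (Unit ⊕ Fin d) (Unit ⊕ Fin d) ℂ :=
  Matrix.fromBlocks 0 0 0 (1 - xiProj d ξ)

/-- The eigenprojection `Π₊(ξ) = (λ₊−λ₋)⁻¹ [[−λ₋, −iξᵀ],[−iξ, λ₊ ξξᵀ/|ξ|²]]`. -/
def PiPlus (d : ℕ) (ξ : EuclideanSpace ℝ (Fin d)) : Matrix (Unit ⊕ Fin d) (Unit ⊕ Fin d) ℂ :=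
  (lamPlus d ξ - lamMinus d ξ)⁻¹ •
    Matrix.fromBlocks (Matrix.of fun _ _ => -lamMinus d ξ)
      (Matrix.of fun _ j => -(Complex.I * (ξ j : ℂ)))
      (Matrix.of fun i _ => -(Complex.I * (ξ i : ℂ)))
      (lamPlus d ξ • xiProj d ξ)

/-- The eigenprojection `Π₋(ξ) = −(λ₊−λ₋)⁻¹ [[−λ₊, −iξᵀ],[−iξ, λ₋ ξξᵀ/|ξ|²]]`. -/
def PiMinus (d : ℕ) (ξ : EuclideanSpace ℝ (Fin d)) : Matrix (Unit ⊕ Fin d) (Unit ⊕ Fin d) ℂ :=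
  (-(lamPlus d ξ - lamMinus d ξ)⁻¹) •
    Matrix.fromBlocks (Matrix.of fun _ _ => -lamPlus d ξ)
      (Matrix.of fun _ j => -(Complex.I * (ξ j : ℂ)))
      (Matrix.of fun i _ => -(Complex.I * (ξ i : ℂ)))
      (lamMinus d ξ • xiProj d ξ)

namespace EulerDampAux

variable (d : ℕ) (ξ : EuclideanSpace ℝ (Fin d))

def bcol : Matrix (Fin d) Unit ℂ := Matrix.of fun i _ => Complex.I * (ξ i : ℂ)

def brow : Matrix Unit (Fin d) ℂ := Matrix.of fun _ j => Complex.I * (ξ j : ℂ)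

/-- general block form: `[[a•1, c•brow],[c'•bcol, e•(bcol*brow) + f•1]]`. -/
def M (a c c' e f : ℂ) : Matrix (Unit ⊕ Fin d) (Unit ⊕ Fin d) ℂ :=
  Matrix.fromBlocks (a • 1) (c • brow d ξ) (c' • bcol d ξ)
    (e • (bcol d ξ * brow d ξ) + f • 1)

lemma fromBlocks_congr {l m n o : Type*} {A A' : Matrix n l ℂ} {B B' : Matrix n m ℂ}
    {C C' : Matrix o l ℂ} {D D' : Matrix o m ℂ} (h1 : A = A') (h2 : B = B')
    (h3 : C = C') (h4 : D = D') :
    Matrix.fromBlocks A B C D = Matrix.fromBlocks A' B' C' D' := by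
  rw [h1, h2, h3, h4]

lemma sum_sq : ∑ k, (ξ k : ℂ) * (ξ k : ℂ) = ((‖ξ‖ : ℂ)) ^ 2 := by
  have hnorm : ∑ k, (ξ k : ℝ) ^ 2 = ‖ξ‖ ^ 2 := by
    rw [EuclideanSpace.norm_eq, Real.sq_sqrt (by positivity)]
    simp [Real.norm_eq_abs, sq_abs]
  have : ((∑ k, (ξ k : ℝ) ^ 2 : ℝ) : ℂ) = ((‖ξ‖ : ℝ) : ℂ) ^ 2 := by
    rw [hnorm]; push_cast; ring
  rw [← this]; push_cast; congr 1; funext k; ring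

lemma brow_bcol : brow d ξ * bcol d ξ = (-(‖ξ‖ : ℂ) ^ 2) • 1 := by
  ext u v
  simp only [Matrix.mul_apply, brow, bcol, Matrix.of_apply, Matrix.smul_apply,
    Matrix.one_apply, Subsingleton.elim u v, if_true, smul_eq_mul, mul_one]
  have : ∀ k, (Complex.I * (ξ k : ℂ)) * (Complex.I * (ξ k : ℂ))
      = -((ξ k : ℂ) * (ξ k : ℂ)) := by
    intro k
    have h := Complex.I_mul_I
    ring_nf
    rw [Complex.I_sq]
    ring
  rw [Finset.sum_congr rfl fun k _ => this k, Finset.sum_neg_distrib, sum_sq]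

lemma Bb : (bcol d ξ * brow d ξ) * bcol d ξ = (-(‖ξ‖ : ℂ) ^ 2) • bcol d ξ := by
  rw [Matrix.mul_assoc, brow_bcol, Matrix.mul_smul, Matrix.mul_one]

lemma bB : brow d ξ * (bcol d ξ * brow d ξ) = (-(‖ξ‖ : ℂ) ^ 2) • brow d ξ := by
  rw [← Matrix.mul_assoc, brow_bcol, Matrix.smul_mul, Matrix.one_mul]

lemma BB : (bcol d ξ * brow d ξ) * (bcol d ξ * brow d ξ)
    = (-(‖ξ‖ : ℂ) ^ 2) • (bcol d ξ * brow d ξ) := by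
  rw [Matrix.mul_assoc, bB, Matrix.mul_smul]

lemma M_mul (a c c' e f a₂ c₂ c₂' e₂ f₂ : ℂ) :
    M d ξ a c c' e f * M d ξ a₂ c₂ c₂' e₂ f₂ =
    M d ξ (a * a₂ - (‖ξ‖ : ℂ) ^ 2 * (c * c₂'))
      (a * c₂ + c * f₂ - (‖ξ‖ : ℂ) ^ 2 * (c * e₂))
      (c' * a₂ + f * c₂' - (‖ξ‖ : ℂ) ^ 2 * (e * c₂'))
      (c' * c₂ + e * f₂ + f * e₂ - (‖ξ‖ : ℂ) ^ 2 * (e * e₂))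
      (f * f₂) := by
  unfold M
  rw [Matrix.fromBlocks_multiply]
  refine fromBlocks_congr ?_ ?_ ?_ ?_ <;>
    · simp only [Matrix.smul_mul, Matrix.mul_smul, Matrix.mul_add, Matrix.add_mul,
        Matrix.one_mul, Matrix.mul_one, brow_bcol, bB, Bb, BB]
      module

lemma M_add (a c c' e f a₂ c₂ c₂' e₂ f₂ : ℂ) :
    M d ξ a c c' e f + M d ξ a₂ c₂ c₂' e₂ f₂ =
    M d ξ (a + a₂) (c + c₂) (c' + c₂') (e + e₂) (f + f₂) := by
  unfold M
  rw [Matrix.fromBlocks_add]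
  exact fromBlocks_congr (by module) (by module) (by module) (by module)

lemma M_smul (s a c c' e f : ℂ) :
    s • M d ξ a c c' e f = M d ξ (s * a) (s * c) (s * c') (s * e) (s * f) := by
  unfold M
  rw [Matrix.fromBlocks_smul]
  exact fromBlocks_congr (by module) (by module) (by module) (by module)

lemma M_one : (1 : Matrix (Unit ⊕ Fin d) (Unit ⊕ Fin d) ℂ) = M d ξ 1 0 0 0 1 := by
  unfold M
  rw [← Matrix.fromBlocks_one]
  exact fromBlocks_congr (by module) (by module) (by module) (by module)

lemma M_zero : (0 : Matrix (Unit ⊕ Fin d) (Unit ⊕ Fin d) ℂ) = M d ξ 0 0 0 0 0 := by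
  unfold M
  rw [show (0 : Matrix (Unit ⊕ Fin d) (Unit ⊕ Fin d) ℂ) = Matrix.fromBlocks 0 0 0 0 from
    (Matrix.fromBlocks_zero).symm]
  exact fromBlocks_congr (by module) (by module) (by module) (by module)

lemma symbol_eq : eulerDampingSymbol d ξ = M d ξ 0 1 1 0 1 := by
  unfold eulerDampingSymbol M bcol brow
  exact fromBlocks_congr (by module) (by module) (by module) (by module)

lemma xiProj_eq (h : ‖ξ‖ ≠ 0) :
    xiProj d ξ = (-((‖ξ‖ : ℂ) ^ 2)⁻¹) • (bcol d ξ * brow d ξ) := by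
  ext i j
  simp only [xiProj, Matrix.of_apply, Matrix.smul_apply, Matrix.mul_apply,
    Finset.univ_unique, Finset.sum_singleton, bcol, brow, smul_eq_mul]
  have h2 : ((‖ξ‖ : ℂ)) ^ 2 ≠ 0 := by
    simp [Complex.ofReal_ne_zero, h]
  field_simp
  ring_nf
  rw [Complex.I_sq]
  ring

lemma Pi0_eq (h : ‖ξ‖ ≠ 0) : Pi0 d ξ = M d ξ 0 0 0 ((‖ξ‖ : ℂ) ^ 2)⁻¹ 1 := by
  unfold Pi0 M
  rw [xiProj_eq d ξ h]
  exact fromBlocks_congr (by module) (by module) (by module) (by module)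

lemma PiPlus_eq (h : ‖ξ‖ ≠ 0) :
    PiPlus d ξ = (lamPlus d ξ - lamMinus d ξ)⁻¹ •
      M d ξ (-lamMinus d ξ) (-1) (-1) (-(lamPlus d ξ) * ((‖ξ‖ : ℂ) ^ 2)⁻¹) 0 := by
  unfold PiPlus M
  congr 1
  have hTL : (Matrix.of fun _ _ => -lamMinus d ξ : Matrix Unit Unit ℂ)
      = (-lamMinus d ξ) • (1 : Matrix Unit Unit ℂ) := by
    ext u v
    simp [Matrix.one_apply, Subsingleton.elim u v]
  have hTR : (Matrix.of fun _ j => -(Complex.I * (ξ j : ℂ)) : Matrix Unit (Fin d) ℂ)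
      = (-1 : ℂ) • brow d ξ := by
    ext u j; simp [brow]
  have hBL : (Matrix.of fun i _ => -(Complex.I * (ξ i : ℂ)) : Matrix (Fin d) Unit ℂ)
      = (-1 : ℂ) • bcol d ξ := by
    ext i u; simp [bcol]
  rw [hTL, hTR, hBL, xiProj_eq d ξ h]
  exact fromBlocks_congr rfl rfl rfl (by module)

lemma PiMinus_eq (h : ‖ξ‖ ≠ 0) :
    PiMinus d ξ = (-(lamPlus d ξ - lamMinus d ξ)⁻¹) •
      M d ξ (-lamPlus d ξ) (-1) (-1) (-(lamMinus d ξ) * ((‖ξ‖ : ℂ) ^ 2)⁻¹) 0 := by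
  unfold PiMinus M
  congr 1
  have hTL : (Matrix.of fun _ _ => -lamPlus d ξ : Matrix Unit Unit ℂ)
      = (-lamPlus d ξ) • (1 : Matrix Unit Unit ℂ) := by
    ext u v
    simp [Matrix.one_apply, Subsingleton.elim u v]
  have hTR : (Matrix.of fun _ j => -(Complex.I * (ξ j : ℂ)) : Matrix Unit (Fin d) ℂ)
      = (-1 : ℂ) • brow d ξ := by
    ext u j; simp [brow]
  have hBL : (Matrix.of fun i _ => -(Complex.I * (ξ i : ℂ)) : Matrix (Fin d) Unit ℂ)
      = (-1 : ℂ) • bcol d ξ := by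
    ext i u; simp [bcol]
  rw [hTL, hTR, hBL, xiProj_eq d ξ h]
  exact fromBlocks_congr rfl rfl rfl (by module)

lemma M_congr {a c c' e f a₂ c₂ c₂' e₂ f₂ : ℂ} (h1 : a = a₂) (h2 : c = c₂)
    (h3 : c' = c₂') (h4 : e = e₂) (h5 : f = f₂) :
    M d ξ a c c' e f = M d ξ a₂ c₂ c₂' e₂ f₂ := by
  rw [h1, h2, h3, h4, h5]

end EulerDampAux

open EulerDampAux

set_option maxHeartbeats 6400000 in
/-- For `0 < |ξ| < 1/2`, the matrices `Π₀, Π₊, Π₋` form a complete system of mutually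
orthogonal eigenprojections of `−Â_ξ` with eigenvalues `−1, λ₊, λ₋`. -/
theorem eigenprojections_eulerDampingSymbol (d : ℕ) (ξ : EuclideanSpace ℝ (Fin d))
    (hξ0 : 0 < ‖ξ‖) (hξ : ‖ξ‖ < 1 / 2) :
    Pi0 d ξ + PiPlus d ξ + PiMinus d ξ = 1 ∧
    (Pi0 d ξ * Pi0 d ξ = Pi0 d ξ ∧ PiPlus d ξ * PiPlus d ξ = PiPlus d ξ ∧
      PiMinus d ξ * PiMinus d ξ = PiMinus d ξ) ∧
    (Pi0 d ξ * PiPlus d ξ = 0 ∧ PiPlus d ξ * Pi0 d ξ = 0 ∧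
      Pi0 d ξ * PiMinus d ξ = 0 ∧ PiMinus d ξ * Pi0 d ξ = 0 ∧
      PiPlus d ξ * PiMinus d ξ = 0 ∧ PiMinus d ξ * PiPlus d ξ = 0) ∧
    ((-(eulerDampingSymbol d ξ)) * Pi0 d ξ = (-1 : ℂ) • Pi0 d ξ ∧
      (-(eulerDampingSymbol d ξ)) * PiPlus d ξ = lamPlus d ξ • PiPlus d ξ ∧
      (-(eulerDampingSymbol d ξ)) * PiMinus d ξ = lamMinus d ξ • PiMinus d ξ) := by
  have hs0 : ‖ξ‖ ≠ 0 := ne_of_gt hξ0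
  set rr : ℂ := ((Real.sqrt (1 - 4 * ‖ξ‖ ^ 2) : ℝ) : ℂ) with hrr
  have hpos : (0 : ℝ) < 1 - 4 * ‖ξ‖ ^ 2 := by nlinarith
  have hr0 : rr ≠ 0 := by
    rw [hrr]
    simp only [ne_eq, Complex.ofReal_eq_zero]
    exact ne_of_gt (Real.sqrt_pos.mpr hpos)
  have hrr2 : rr ^ 2 = 1 - 4 * ((‖ξ‖ : ℂ)) ^ 2 := by
    rw [hrr]
    rw [show ((Real.sqrt (1 - 4 * ‖ξ‖ ^ 2) : ℝ) : ℂ) ^ 2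
        = (((Real.sqrt (1 - 4 * ‖ξ‖ ^ 2)) ^ 2 : ℝ) : ℂ) by push_cast; ring]
    rw [Real.sq_sqrt hpos.le]
    push_cast
    ring
  have hqr : ((‖ξ‖ : ℂ)) ^ 2 = (1 - rr ^ 2) / 4 := by
    rw [hrr2]; ring
  have h1r : (1 : ℂ) - rr ^ 2 ≠ 0 := by
    rw [hrr2]
    intro h
    apply hs0
    have : ((‖ξ‖ : ℂ)) ^ 2 = 0 := by linear_combination h / 4
    simpa using this
  have hq0 : ((‖ξ‖ : ℂ)) ^ 2 ≠ 0 := by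
    simp [Complex.ofReal_ne_zero, hs0]
  have hlp : lamPlus d ξ = (-1 + rr) / 2 := rfl
  have hlm : lamMinus d ξ = (-1 - rr) / 2 := rfl
  have hdiff : lamPlus d ξ - lamMinus d ξ = rr := by rw [hlp, hlm]; ring
  have h0 := Pi0_eq d ξ hs0
  have hp : PiPlus d ξ = M d ξ (rr⁻¹ * -lamMinus d ξ) (rr⁻¹ * -1) (rr⁻¹ * -1)
      (rr⁻¹ * (-lamPlus d ξ * ((‖ξ‖ : ℂ) ^ 2)⁻¹)) (rr⁻¹ * 0) := by
    rw [PiPlus_eq d ξ hs0, hdiff, M_smul]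
  have hm : PiMinus d ξ = M d ξ (-rr⁻¹ * -lamPlus d ξ) (-rr⁻¹ * -1) (-rr⁻¹ * -1)
      (-rr⁻¹ * (-lamMinus d ξ * ((‖ξ‖ : ℂ) ^ 2)⁻¹)) (-rr⁻¹ * 0) := by
    rw [PiMinus_eq d ξ hs0, hdiff, M_smul]
  have hA : -(eulerDampingSymbol d ξ)
      = M d ξ (-1 * 0) (-1 * 1) (-1 * 1) (-1 * 0) (-1 * 1) := by
    rw [symbol_eq, ← neg_one_smul ℂ (M d ξ 0 1 1 0 1), M_smul]
  have hX1 : rr ^ 4 - rr ^ 6 ≠ 0 := by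
    have h4 : rr ^ 4 * (1 - rr ^ 2) ≠ 0 := mul_ne_zero (pow_ne_zero 4 hr0) h1r
    intro h; apply h4; linear_combination h
  have hX2 : rr ^ 4 * (1 / 4) + rr ^ 6 * (-1 / 2) + rr ^ 8 * (1 / 4) ≠ 0 := by
    have h4 : rr ^ 4 * (1 - rr ^ 2) ^ 2 ≠ 0 :=
      mul_ne_zero (pow_ne_zero 4 hr0) (pow_ne_zero 2 h1r)
    intro h; apply h4; linear_combination 4 * h
  refine ⟨?_, ⟨?_, ?_, ?_⟩, ⟨?_, ?_, ?_, ?_, ?_, ?_⟩, ?_, ?_, ?_⟩ <;>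
    simp only [h0, hp, hm, hA, M_mul, M_add, M_smul, M_one d ξ, M_zero d ξ] <;>
    refine M_congr d ξ ?_ ?_ ?_ ?_ ?_ <;>
    · try simp only [hlp, hlm, hqr]
      try field_simp [hr0, hq0, h1r]
      try simp only [hqr]
      all_goals try ring
      all_goals try linear_combination (-1 : ℂ) * mul_inv_cancel₀ hX1
      all_goals try linear_combination mul_inv_cancel₀ hX1
      all_goals try linear_combination (1 - rr) * mul_inv_cancel₀ hX2
      all_goals try linear_combination (-1 - rr) * mul_inv_cancel₀ hX2
      all_goals try linear_combination (1 + rr) * mul_inv_cancel₀ hX2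
      all_goals try linear_combination (rr - 1) * mul_inv_cancel₀ hX2
end
end

section
/- Let 0 < r_∞ < 1/2. Then there is a constant C such that for all ξ with 0 < |ξ| ≤ r_∞ and all t ∈ [0,T], the matrix exponential satisfies ‖e^{−t Â_ξ}‖ ≤ C, where Â_ξ = [[0, iξᵀ],[iξ, I_d]]. In particular e^{−tÂ_ξ} = e^{tλ₊(ξ)} Π₊(ξ) + e^{tλ₋(ξ)} Π₋(ξ) + e^{−t} Π₀(ξ) with the eigenprojections satisfying ‖Π_j(ξ)‖ ≤ C uniformly for |ξ| ≤ r_∞. -/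
set_option maxHeartbeats 1000000


noncomputable section

open NormedSpace Nat

lemma exp_smul_idem {A : Type*} [NormedRing A] [NormedAlgebra ℂ A] [CompleteSpace A]
    (c : ℂ) (P : A) (hP : P * P = P) :
    exp (c • P) = 1 + (Complex.exp c - 1) • P := by
  have hPn : ∀ n : ℕ, P ^ (n + 1) = P := by
    intro n
    induction n with
    | zero => simp
    | succ k ih => rw [pow_succ, ih, hP]
  have h1 : ∀ n : ℕ, ((n ! : ℂ))⁻¹ • (c • P) ^ n = (((n ! : ℂ))⁻¹ * c ^ n) • P ^ n := by
    intro n; rw [smul_pow, smul_smul]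
  have hs2 : Summable (fun n : ℕ => ((n ! : ℂ))⁻¹ • c ^ n) := expSeries_summable' (𝕂 := ℂ) c
  have hscal : Summable (fun n : ℕ => (((n + 1)! : ℂ))⁻¹ * c ^ (n + 1)) := by
    simpa [Function.comp_def] using hs2.comp_injective (add_left_injective 1)
  have hS : (∑' n : ℕ, (((n + 1)! : ℂ))⁻¹ * c ^ (n + 1)) = Complex.exp c - 1 := by
    have hexp : Complex.exp c = ∑' n : ℕ, ((n ! : ℂ))⁻¹ • c ^ n := by
      rw [Complex.exp_eq_exp_ℂ, exp_eq_tsum (𝕂 := ℂ)]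
    rw [hexp, Summable.tsum_eq_zero_add hs2]
    simp [smul_eq_mul]
  rw [exp_eq_tsum (𝕂 := ℂ)]
  show (∑' n : ℕ, ((n ! : ℂ))⁻¹ • (c • P) ^ n) = _
  have hsum : Summable (fun n : ℕ => ((n ! : ℂ))⁻¹ • (c • P) ^ n) :=
    expSeries_summable' (𝕂 := ℂ) (c • P)
  rw [Summable.tsum_eq_zero_add hsum]
  simp only [h1, pow_zero, Nat.factorial_zero, hPn]
  rw [Summable.tsum_smul_const hscal, hS]
  simp

lemma Matrix.exp_smul_idem' {n : Type*} [Fintype n] [DecidableEq n]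
    (c : ℂ) (P : Matrix n n ℂ) (hP : P * P = P) :
    exp (c • P) = 1 + (Complex.exp c - 1) • P := by
  letI : SeminormedRing (Matrix n n ℂ) := Matrix.linftyOpSemiNormedRing
  letI : NormedRing (Matrix n n ℂ) := Matrix.linftyOpNormedRing
  letI : NormedAlgebra ℂ (Matrix n n ℂ) := Matrix.linftyOpNormedAlgebra
  exact exp_smul_idem c P hP

/-! ### The canonical 5-parameter matrix form -/

def MF (d : ℕ) (ξ : EuclideanSpace ℝ (Fin d)) (a b c e f : ℂ) :
    Matrix (Unit ⊕ Fin d) (Unit ⊕ Fin d) ℂ :=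
  Matrix.of fun i j =>
    match i, j with
    | .inl _, .inl _ => a
    | .inl _, .inr j => b * (ξ j : ℂ)
    | .inr i, .inl _ => c * (ξ i : ℂ)
    | .inr i, .inr j => (if i = j then e else 0) + f * ((ξ i : ℂ) * (ξ j : ℂ) / (‖ξ‖ : ℂ) ^ 2)

variable {d : ℕ} {ξ : EuclideanSpace ℝ (Fin d)}

lemma MF_mul (hne : ((‖ξ‖ : ℂ)) ^ 2 ≠ 0)
    (hsum : (∑ k, (ξ k : ℂ) ^ 2) = (‖ξ‖ : ℂ) ^ 2)
    (a b c e f a' b' c' e' f' : ℂ) :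
    MF d ξ a b c e f * MF d ξ a' b' c' e' f' =
      MF d ξ (a * a' + b * c' * (‖ξ‖ : ℂ) ^ 2) (a * b' + b * (e' + f'))
        (c * a' + (e + f) * c') (e * e')
        (c * b' * (‖ξ‖ : ℂ) ^ 2 + e * f' + f * e' + f * f') := by
  set R : ℂ := (‖ξ‖ : ℂ) ^ 2 with hR
  ext i j
  cases i with
  | inl u => cases j with
    | inl v =>
      simp only [MF, Matrix.mul_apply, Matrix.of_apply, Fintype.sum_sum_type,
        Finset.univ_unique, Finset.sum_singleton]
      have h : ∑ x, b * (ξ x : ℂ) * (c' * (ξ x : ℂ)) = b * c' * R := by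
        rw [← hsum, Finset.mul_sum]
        exact Finset.sum_congr rfl fun x _ => by ring
      rw [h]
    | inr j =>
      simp only [MF, Matrix.mul_apply, Matrix.of_apply, Fintype.sum_sum_type,
        Finset.univ_unique, Finset.sum_singleton]
      have h : ∑ x, b * (ξ x : ℂ) * ((if x = j then e' else 0) + f' * ((ξ x : ℂ) * (ξ j : ℂ) / R))
          = b * e' * (ξ j : ℂ) + b * f' * (ξ j : ℂ) := by
        have h1 : ∀ x, b * (ξ x : ℂ) * ((if x = j then e' else 0) + f' * ((ξ x : ℂ) * (ξ j : ℂ) / R))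
            = (if x = j then b * e' * (ξ x : ℂ) else 0) + (b * f' * (ξ j : ℂ) / R) * (ξ x : ℂ) ^ 2 := by
          intro x; split <;> ring
        rw [Finset.sum_congr rfl fun x _ => h1 x, Finset.sum_add_distrib,
          Finset.sum_ite_eq' Finset.univ j fun x => b * e' * (ξ x : ℂ),
          ← Finset.mul_sum, hsum]
        simp only [Finset.mem_univ, if_true]
        field_simp
      rw [h]; ring
  | inr i => cases j with
    | inl v =>
      simp only [MF, Matrix.mul_apply, Matrix.of_apply, Fintype.sum_sum_type,
        Finset.univ_unique, Finset.sum_singleton]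
      have h : ∑ x, ((if i = x then e else 0) + f * ((ξ i : ℂ) * (ξ x : ℂ) / R)) * (c' * (ξ x : ℂ))
          = e * c' * (ξ i : ℂ) + f * c' * (ξ i : ℂ) := by
        have h1 : ∀ x, ((if i = x then e else 0) + f * ((ξ i : ℂ) * (ξ x : ℂ) / R)) * (c' * (ξ x : ℂ))
            = (if i = x then e * c' * (ξ x : ℂ) else 0) + (f * c' * (ξ i : ℂ) / R) * (ξ x : ℂ) ^ 2 := by
          intro x; split <;> ring
        rw [Finset.sum_congr rfl fun x _ => h1 x, Finset.sum_add_distrib,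
          Finset.sum_ite_eq Finset.univ i fun x => e * c' * (ξ x : ℂ),
          ← Finset.mul_sum, hsum]
        simp only [Finset.mem_univ, if_true]
        field_simp
      rw [h]; ring
    | inr j =>
      simp only [MF, Matrix.mul_apply, Matrix.of_apply, Fintype.sum_sum_type,
        Finset.univ_unique, Finset.sum_singleton]
      have h : ∑ x, ((if i = x then e else 0) + f * ((ξ i : ℂ) * (ξ x : ℂ) / R)) *
            ((if x = j then e' else 0) + f' * ((ξ x : ℂ) * (ξ j : ℂ) / R))
          = (if i = j then e * e' else 0) + (e * f' + f * e') * ((ξ i : ℂ) * (ξ j : ℂ) / R)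
            + f * f' * ((ξ i : ℂ) * (ξ j : ℂ) / R) := by
        have h1 : ∀ x, ((if i = x then e else 0) + f * ((ξ i : ℂ) * (ξ x : ℂ) / R)) *
              ((if x = j then e' else 0) + f' * ((ξ x : ℂ) * (ξ j : ℂ) / R))
            = (if i = x then (if x = j then e * e' else 0) + e * (f' * ((ξ x : ℂ) * (ξ j : ℂ) / R)) else 0)
              + (if x = j then f * ((ξ i : ℂ) * (ξ x : ℂ) / R) * e' else 0)
              + (f * f' * ((ξ i : ℂ) * (ξ j : ℂ)) / R ^ 2) * (ξ x : ℂ) ^ 2 := by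
          intro x
          split_ifs <;> subst_vars <;> first | ring | simp_all
        rw [Finset.sum_congr rfl fun x _ => h1 x, Finset.sum_add_distrib, Finset.sum_add_distrib,
          Finset.sum_ite_eq Finset.univ i, Finset.sum_ite_eq' Finset.univ j,
          ← Finset.mul_sum, hsum]
        simp only [Finset.mem_univ, if_true]
        field_simp
        ring
      rw [h]
      by_cases hij : i = j <;> simp [hij, ← hR] <;> field_simp <;> ring

lemma MF_add (a b c e f a' b' c' e' f' : ℂ) :
    MF d ξ a b c e f + MF d ξ a' b' c' e' f' =
      MF d ξ (a + a') (b + b') (c + c') (e + e') (f + f') := by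
  ext i j
  cases i <;> cases j <;>
    simp only [MF, Matrix.add_apply, Matrix.of_apply] <;>
    (try split_ifs) <;> ring

lemma MF_smul (z a b c e f : ℂ) :
    z • MF d ξ a b c e f = MF d ξ (z * a) (z * b) (z * c) (z * e) (z * f) := by
  ext i j
  cases i <;> cases j <;>
    simp only [MF, Matrix.smul_apply, Matrix.of_apply, smul_eq_mul] <;>
    (try split_ifs) <;> ring

lemma MF_one : (1 : Matrix (Unit ⊕ Fin d) (Unit ⊕ Fin d) ℂ) = MF d ξ 1 0 0 1 0 := by
  ext i j
  cases i with
  | inl u => cases j with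
    | inl v => simp [MF, Matrix.one_apply]
    | inr j => simp [MF, Matrix.one_apply]
  | inr i => cases j with
    | inl v => simp [MF, Matrix.one_apply]
    | inr j =>
      simp only [MF, Matrix.one_apply, Matrix.of_apply, Sum.inr.injEq, mul_zero, zero_mul]
      split_ifs <;> simp

lemma MF_zero : MF d ξ 0 0 0 0 0 = 0 := by
  ext i j
  cases i <;> cases j <;> simp [MF]

/-! ### Identification with the canonical form -/

lemma euler_eq_MF : eulerDampingSymbol d ξ = MF d ξ 0 Complex.I Complex.I 1 0 := by
  ext i j
  cases i <;> cases j <;>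
    simp [eulerDampingSymbol, MF, Matrix.one_apply]

lemma Pi0_eq_MF : Pi0 d ξ = MF d ξ 0 0 0 1 (-1) := by
  ext i j
  cases i <;> cases j <;>
    simp [Pi0, xiProj, MF, Matrix.one_apply, Matrix.sub_apply, sub_eq_add_neg]

lemma PiPlus_eq_MF :
    PiPlus d ξ = MF d ξ ((lamPlus d ξ - lamMinus d ξ)⁻¹ * -lamMinus d ξ)
      ((lamPlus d ξ - lamMinus d ξ)⁻¹ * -Complex.I)
      ((lamPlus d ξ - lamMinus d ξ)⁻¹ * -Complex.I) 0
      ((lamPlus d ξ - lamMinus d ξ)⁻¹ * lamPlus d ξ) := by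
  ext i j
  cases i <;> cases j <;>
    simp [PiPlus, xiProj, MF, Matrix.smul_apply, smul_eq_mul] <;> ring

lemma PiMinus_eq_MF :
    PiMinus d ξ = MF d ξ ((lamPlus d ξ - lamMinus d ξ)⁻¹ * lamPlus d ξ)
      ((lamPlus d ξ - lamMinus d ξ)⁻¹ * Complex.I)
      ((lamPlus d ξ - lamMinus d ξ)⁻¹ * Complex.I) 0
      ((lamPlus d ξ - lamMinus d ξ)⁻¹ * -lamMinus d ξ) := by
  ext i j
  cases i <;> cases j <;>
    simp [PiMinus, xiProj, MF, Matrix.smul_apply, smul_eq_mul] <;> ring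

lemma MF_congr {a b c e f a' b' c' e' f' : ℂ} (ha : a = a') (hb : b = b') (hc : c = c')
    (he : e = e') (hf : f = f') : MF d ξ a b c e f = MF d ξ a' b' c' e' f' := by
  rw [ha, hb, hc, he, hf]

lemma coord_le_norm (j : Fin d) : |ξ j| ≤ ‖ξ‖ := by
  rw [EuclideanSpace.norm_eq]
  calc |ξ j| = Real.sqrt (‖ξ j‖ ^ 2) := by
        rw [Real.sqrt_sq_eq_abs]; simp [abs_abs, Real.norm_eq_abs]
    _ ≤ _ := by
        apply Real.sqrt_le_sqrt
        exact Finset.single_le_sum (f := fun i => ‖ξ i‖ ^ 2) (fun i _ => by positivity)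
          (Finset.mem_univ j)

/-- For `0 < r_∞ < 1/2`, the matrix exponential `e^{−tÂ_ξ}` is bounded uniformly
for `0 < |ξ| ≤ r_∞` and `t ∈ [0,T]`, and it admits the spectral resolution
`e^{−tÂ_ξ} = e^{tλ₊}Π₊ + e^{tλ₋}Π₋ + e^{−t}Π₀` with uniformly bounded projections. -/
theorem matrix_exponential_low_frequency_bound (d : ℕ) (rinf T : ℝ)
    (h0 : 0 < rinf) (h1 : rinf < 1 / 2) (hT : 0 ≤ T) :
    ∃ C : ℝ, 0 < C ∧
      ∀ ξ : EuclideanSpace ℝ (Fin d), 0 < ‖ξ‖ → ‖ξ‖ ≤ rinf →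
        ∀ t : ℝ, t ∈ Set.Icc (0 : ℝ) T →
          (∀ i j, ‖NormedSpace.exp (-((t : ℂ) • eulerDampingSymbol d ξ)) i j‖ ≤ C) ∧
          NormedSpace.exp (-((t : ℂ) • eulerDampingSymbol d ξ)) =
            Complex.exp ((t : ℂ) * lamPlus d ξ) • PiPlus d ξ +
              Complex.exp ((t : ℂ) * lamMinus d ξ) • PiMinus d ξ +
              Complex.exp (-(t : ℂ)) • Pi0 d ξ ∧
          (∀ i j, ‖PiPlus d ξ i j‖ ≤ C ∧ ‖PiMinus d ξ i j‖ ≤ C ∧ ‖Pi0 d ξ i j‖ ≤ C) := by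
  have hs0 : 0 < 1 - 4 * rinf ^ 2 := by nlinarith
  set u₀ : ℝ := (Real.sqrt (1 - 4 * rinf ^ 2))⁻¹ with hu₀def
  have hsq0 : 0 < Real.sqrt (1 - 4 * rinf ^ 2) := Real.sqrt_pos.2 hs0
  have hsq1 : Real.sqrt (1 - 4 * rinf ^ 2) ≤ 1 := by
    calc Real.sqrt (1 - 4 * rinf ^ 2) ≤ Real.sqrt 1 := Real.sqrt_le_sqrt (by nlinarith)
      _ = 1 := Real.sqrt_one
  have hu₀pos : 0 < u₀ := by positivity
  have hu₀1 : 1 ≤ u₀ := by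
    rw [hu₀def, le_inv_comm₀]
    · simpa using hsq1
    · norm_num
    · exact hsq0
  refine ⟨15 * u₀, by positivity, ?_⟩
  intro ξ hξpos hξle t ht
  obtain ⟨ht0, htT⟩ := ht
  -- basic scalar facts
  have hξhalf : ‖ξ‖ < 1 / 2 := lt_of_le_of_lt hξle h1
  have harg : 0 < 1 - 4 * ‖ξ‖ ^ 2 := by nlinarith
  set σ : ℝ := Real.sqrt (1 - 4 * ‖ξ‖ ^ 2) with hσdef
  have hσpos : 0 < σ := Real.sqrt_pos.2 harg
  have hσle : σ ≤ 1 := by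
    rw [hσdef]
    calc Real.sqrt (1 - 4 * ‖ξ‖ ^ 2) ≤ Real.sqrt 1 := Real.sqrt_le_sqrt (by nlinarith)
      _ = 1 := Real.sqrt_one
  set p : ℂ := lamPlus d ξ with hpdef
  set m : ℂ := lamMinus d ξ with hmdef
  have hpm_sub : p - m = (σ : ℂ) := by
    rw [hpdef, hmdef, lamPlus, lamMinus]; push_cast; ring
  have hσne : (σ : ℂ) ≠ 0 := by
    exact_mod_cast hσpos.ne'
  have hdne : p - m ≠ 0 := by rw [hpm_sub]; exact hσne
  have hσsq : (σ : ℂ) ^ 2 = 1 - 4 * (‖ξ‖ : ℂ) ^ 2 := by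
    have h := Real.sq_sqrt harg.le
    rw [hσdef]; push_cast [h]; push_cast; norm_cast
  have hpmul : p * m = (‖ξ‖ : ℂ) ^ 2 := by
    rw [hpdef, hmdef, lamPlus, lamMinus]
    have : ((Real.sqrt (1 - 4 * ‖ξ‖ ^ 2) : ℝ) : ℂ) = (σ : ℂ) := by rw [hσdef]
    rw [this]
    field_simp
    linear_combination -hσsq
  have hpadd : p + m = -1 := by
    rw [hpdef, hmdef, lamPlus, lamMinus]; ring
  have hRne : ((‖ξ‖ : ℂ)) ^ 2 ≠ 0 := by
    have : (‖ξ‖ : ℂ) ≠ 0 := by exact_mod_cast hξpos.ne'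
    exact pow_ne_zero 2 this
  have hsum : (∑ k, (ξ k : ℂ) ^ 2) = (‖ξ‖ : ℂ) ^ 2 := by
    have hre : ‖ξ‖ ^ 2 = ∑ k, (ξ k) ^ 2 := by
      rw [EuclideanSpace.norm_eq, Real.sq_sqrt (by positivity)]
      exact Finset.sum_congr rfl fun k _ => by rw [Real.norm_eq_abs, sq_abs]
    calc (∑ k, (ξ k : ℂ) ^ 2) = ((∑ k, (ξ k) ^ 2 : ℝ) : ℂ) := by push_cast; rfl
      _ = (‖ξ‖ : ℂ) ^ 2 := by rw [← hre]; push_cast; rfl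
  -- norm facts about p, m
  have hp_real : p = (((-1 + σ) / 2 : ℝ) : ℂ) := by
    rw [hpdef, lamPlus, hσdef]; push_cast; ring
  have hm_real : m = (((-1 - σ) / 2 : ℝ) : ℂ) := by
    rw [hmdef, lamMinus, hσdef]; push_cast; ring
  have hpnorm : ‖p‖ ≤ 1 := by
    rw [hp_real, Complex.norm_real, Real.norm_eq_abs, abs_le]
    constructor <;> nlinarith
  have hmnorm : ‖m‖ ≤ 1 := by
    rw [hm_real, Complex.norm_real, Real.norm_eq_abs, abs_le]
    constructor <;> nlinarith
  have hexp_p : ‖Complex.exp ((t : ℂ) * p)‖ ≤ 1 := by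
    have : (t : ℂ) * p = (((t * ((-1 + σ) / 2)) : ℝ) : ℂ) := by rw [hp_real]; push_cast; ring
    rw [this, ← Complex.ofReal_exp, Complex.norm_real, Real.norm_eq_abs,
      abs_of_pos (Real.exp_pos _), Real.exp_le_one_iff]
    nlinarith
  have hexp_m : ‖Complex.exp ((t : ℂ) * m)‖ ≤ 1 := by
    have : (t : ℂ) * m = (((t * ((-1 - σ) / 2)) : ℝ) : ℂ) := by rw [hm_real]; push_cast; ring
    rw [this, ← Complex.ofReal_exp, Complex.norm_real, Real.norm_eq_abs,
      abs_of_pos (Real.exp_pos _), Real.exp_le_one_iff]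
    nlinarith
  have hσge : Real.sqrt (1 - 4 * rinf ^ 2) ≤ σ := by
    rw [hσdef]
    exact Real.sqrt_le_sqrt (by nlinarith)
  have hunorm : ‖(p - m)⁻¹‖ ≤ u₀ := by
    rw [hpm_sub, norm_inv, Complex.norm_real, Real.norm_eq_abs, abs_of_pos hσpos, hu₀def]
    exact inv_anti₀ hsq0 hσge
  clear_value p m
  -- MF forms
  have hPp := PiPlus_eq_MF (d := d) (ξ := ξ)
  have hPm := PiMinus_eq_MF (d := d) (ξ := ξ)
  have hP0 := Pi0_eq_MF (d := d) (ξ := ξ)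
  rw [← hpdef, ← hmdef] at hPp hPm
  have tac0 : True := trivial
  -- matrix identities
  have hPpPp : PiPlus d ξ * PiPlus d ξ = PiPlus d ξ := by
    rw [hPp, MF_mul hRne hsum]
    refine MF_congr ?_ ?_ ?_ ?_ ?_ <;>
      ((try field_simp [hdne]); (try simp only [Complex.I_sq, ← hpmul]); (try ring))
  have hPmPm : PiMinus d ξ * PiMinus d ξ = PiMinus d ξ := by
    rw [hPm, MF_mul hRne hsum]
    refine MF_congr ?_ ?_ ?_ ?_ ?_ <;>
      ((try field_simp [hdne]); (try simp only [Complex.I_sq, ← hpmul]); (try ring))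
  have hPpPm : PiPlus d ξ * PiMinus d ξ = 0 := by
    rw [hPp, hPm, MF_mul hRne hsum, ← MF_zero (d := d) (ξ := ξ)]
    refine MF_congr ?_ ?_ ?_ ?_ ?_ <;>
      ((try field_simp [hdne]); (try simp only [Complex.I_sq, ← hpmul]); (try ring))
  have hPmPp : PiMinus d ξ * PiPlus d ξ = 0 := by
    rw [hPp, hPm, MF_mul hRne hsum, ← MF_zero (d := d) (ξ := ξ)]
    refine MF_congr ?_ ?_ ?_ ?_ ?_ <;>
      ((try field_simp [hdne]); (try simp only [Complex.I_sq, ← hpmul]); (try ring))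
  have hsum1 : PiPlus d ξ + PiMinus d ξ + Pi0 d ξ = 1 := by
    rw [hPp, hPm, hP0, MF_add, MF_add, MF_one (d := d) (ξ := ξ)]
    refine MF_congr ?_ ?_ ?_ ?_ ?_ <;>
      ((try field_simp [hdne]); (try simp only [Complex.I_sq, ← hpmul]); (try ring))
  -- decomposition of the generator
  have hgen : -((t : ℂ) • eulerDampingSymbol d ξ) =
      ((t : ℂ) * (p + 1)) • PiPlus d ξ + ((t : ℂ) * (m + 1)) • PiMinus d ξ +
        (-(t : ℂ)) • (1 : Matrix (Unit ⊕ Fin d) (Unit ⊕ Fin d) ℂ) := by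
    rw [euler_eq_MF, hPp, hPm, MF_one (d := d) (ξ := ξ), ← neg_smul, MF_smul, MF_smul,
      MF_smul, MF_smul, MF_add, MF_add]
    refine MF_congr ?_ ?_ ?_ ?_ ?_ <;>
      ((try field_simp [hdne]); (try ring);
       (try linear_combination (↑t * (p - m)) * hpadd);
       (try linear_combination (-(↑t) * (p - m)) * hpadd);
       (try linear_combination ↑t * hpadd);
       (try linear_combination (-(↑t)) * hpadd))
  -- exponential computation
  set α : ℂ := Complex.exp ((t : ℂ) * (p + 1)) - 1 with hα
  set β : ℂ := Complex.exp ((t : ℂ) * (m + 1)) - 1 with hβ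
  set γ : ℂ := Complex.exp (-(t : ℂ)) - 1 with hγ
  have hXY : Commute (((t : ℂ) * (p + 1)) • PiPlus d ξ) (((t : ℂ) * (m + 1)) • PiMinus d ξ) := by
    show _ * _ = _ * _
    rw [smul_mul_smul_comm, smul_mul_smul_comm, hPpPm, hPmPp, smul_zero, smul_zero]
  have hcommZ : ∀ M : Matrix (Unit ⊕ Fin d) (Unit ⊕ Fin d) ℂ,
      Commute M ((-(t : ℂ)) • (1 : Matrix (Unit ⊕ Fin d) (Unit ⊕ Fin d) ℂ)) :=
    fun M => (Commute.one_right M).smul_right _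
  have hexpX : NormedSpace.exp (((t : ℂ) * (p + 1)) • PiPlus d ξ) = 1 + α • PiPlus d ξ :=
    Matrix.exp_smul_idem' _ _ hPpPp
  have hexpY : NormedSpace.exp (((t : ℂ) * (m + 1)) • PiMinus d ξ) = 1 + β • PiMinus d ξ :=
    Matrix.exp_smul_idem' _ _ hPmPm
  have hexpZ : NormedSpace.exp ((-(t : ℂ)) • (1 : Matrix (Unit ⊕ Fin d) (Unit ⊕ Fin d) ℂ)) =
      1 + γ • (1 : Matrix (Unit ⊕ Fin d) (Unit ⊕ Fin d) ℂ) :=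
    Matrix.exp_smul_idem' _ _ (one_mul 1)
  have hstep1 : (1 + α • PiPlus d ξ) * (1 + β • PiMinus d ξ) =
      1 + α • PiPlus d ξ + β • PiMinus d ξ := by
    rw [mul_add, mul_one, add_mul, one_mul, smul_mul_smul_comm, hPpPm, smul_zero, add_zero]
  have hres : NormedSpace.exp (-((t : ℂ) • eulerDampingSymbol d ξ)) =
      Complex.exp ((t : ℂ) * p) • PiPlus d ξ + Complex.exp ((t : ℂ) * m) • PiMinus d ξ +
        Complex.exp (-(t : ℂ)) • Pi0 d ξ := by
    rw [hgen, Matrix.exp_add_of_commute _ _ (hcommZ _),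
      Matrix.exp_add_of_commute _ _ hXY, hexpX, hexpY, hexpZ, hstep1]
    have hEp : Complex.exp ((t : ℂ) * p) =
        Complex.exp ((t : ℂ) * (p + 1)) * Complex.exp (-(t : ℂ)) := by
      rw [← Complex.exp_add]; congr 1; ring
    have hEm : Complex.exp ((t : ℂ) * m) =
        Complex.exp ((t : ℂ) * (m + 1)) * Complex.exp (-(t : ℂ)) := by
      rw [← Complex.exp_add]; congr 1; ring
    rw [hEp, hEm, mul_add, mul_one, mul_smul_comm, mul_one, ← hsum1, hα, hβ, hγ]
    set EP := Complex.exp ((t : ℂ) * (p + 1))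
    set EM := Complex.exp ((t : ℂ) * (m + 1))
    set E0 := Complex.exp (-(t : ℂ))
    module
  -- entrywise bounds
  have hξ1 : ‖ξ‖ ≤ 1 := by linarith
  have hMFb : ∀ (a b c e f : ℂ) i j, ‖MF d ξ a b c e f i j‖ ≤ ‖a‖ + ‖b‖ + ‖c‖ + ‖e‖ + ‖f‖ := by
    intro a b c e f i j
    have hb : ∀ k : Fin d, ‖((ξ k : ℝ) : ℂ)‖ ≤ 1 := by
      intro k
      rw [Complex.norm_real, Real.norm_eq_abs]
      exact le_trans (coord_le_norm k) hξ1
    have hproj : ∀ k l : Fin d, ‖(ξ k : ℂ) * (ξ l : ℂ) / ((‖ξ‖ : ℂ)) ^ 2‖ ≤ 1 := by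
      intro k l
      rw [norm_div, norm_mul, norm_pow, Complex.norm_real, Real.norm_eq_abs,
        Complex.norm_real, Complex.norm_real, Real.norm_eq_abs, Real.norm_eq_abs,
        abs_of_pos hξpos]
      rw [div_le_one (by positivity)]
      have h1 := coord_le_norm (ξ := ξ) k
      have h2 := coord_le_norm (ξ := ξ) l
      have h3 := abs_nonneg (ξ k)
      have h4 := abs_nonneg (ξ l)
      nlinarith
    have na := norm_nonneg a; have nb := norm_nonneg b; have nc := norm_nonneg c
    have ne' := norm_nonneg e; have nf := norm_nonneg f
    cases i with
    | inl u => cases j with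
      | inl v =>
        simp only [MF, Matrix.of_apply]; linarith
      | inr j =>
        simp only [MF, Matrix.of_apply]
        calc ‖b * (ξ j : ℂ)‖ = ‖b‖ * ‖((ξ j : ℝ) : ℂ)‖ := norm_mul _ _
          _ ≤ ‖b‖ * 1 := by nlinarith [hb j]
          _ ≤ _ := by linarith
    | inr i => cases j with
      | inl v =>
        simp only [MF, Matrix.of_apply]
        calc ‖c * (ξ i : ℂ)‖ = ‖c‖ * ‖((ξ i : ℝ) : ℂ)‖ := norm_mul _ _
          _ ≤ ‖c‖ * 1 := by nlinarith [hb i]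
          _ ≤ _ := by linarith
      | inr j =>
        simp only [MF, Matrix.of_apply]
        have h1 : ‖(if i = j then e else 0)‖ ≤ ‖e‖ := by split <;> simp [ne']
        have h2 : ‖f * ((ξ i : ℂ) * (ξ j : ℂ) / ((‖ξ‖ : ℂ)) ^ 2)‖ ≤ ‖f‖ := by
          rw [norm_mul]
          nlinarith [hproj i j]
        calc ‖(if i = j then e else 0) + f * ((ξ i : ℂ) * (ξ j : ℂ) / ((‖ξ‖ : ℂ)) ^ 2)‖
            ≤ ‖(if i = j then e else 0)‖ + ‖f * ((ξ i : ℂ) * (ξ j : ℂ) / ((‖ξ‖ : ℂ)) ^ 2)‖ :=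
              norm_add_le _ _
          _ ≤ _ := by linarith
  have hcoef : ∀ z : ℂ, ‖z‖ ≤ 1 → ‖(p - m)⁻¹ * z‖ ≤ u₀ := by
    intro z hz
    rw [norm_mul]
    calc ‖(p - m)⁻¹‖ * ‖z‖ ≤ u₀ * 1 := by
          apply mul_le_mul hunorm hz (norm_nonneg _) (le_of_lt hu₀pos)
      _ = u₀ := mul_one _
  have hPpb : ∀ i j, ‖PiPlus d ξ i j‖ ≤ 4 * u₀ := by
    intro i j
    rw [hPp]
    calc ‖MF d ξ _ _ _ _ _ i j‖ ≤ _ := hMFb _ _ _ _ _ i j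
      _ ≤ u₀ + u₀ + u₀ + 0 + u₀ := by
          gcongr
          · exact hcoef _ (by simpa using hmnorm)
          · exact hcoef _ (by simp)
          · exact hcoef _ (by simp)
          · simp
          · exact hcoef _ hpnorm
      _ = 4 * u₀ := by ring
  have hPmb : ∀ i j, ‖PiMinus d ξ i j‖ ≤ 4 * u₀ := by
    intro i j
    rw [hPm]
    calc ‖MF d ξ _ _ _ _ _ i j‖ ≤ _ := hMFb _ _ _ _ _ i j
      _ ≤ u₀ + u₀ + u₀ + 0 + u₀ := by
          gcongr
          · exact hcoef _ hpnorm
          · exact hcoef _ (by simp)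
          · exact hcoef _ (by simp)
          · simp
          · exact hcoef _ (by simpa using hmnorm)
      _ = 4 * u₀ := by ring
  have hP0b : ∀ i j, ‖Pi0 d ξ i j‖ ≤ 2 := by
    intro i j
    rw [hP0]
    calc ‖MF d ξ _ _ _ _ _ i j‖ ≤ _ := hMFb _ _ _ _ _ i j
      _ ≤ 2 := by norm_num
  have hexp0 : ‖Complex.exp (-(t : ℂ))‖ ≤ 1 := by
    have : -(t : ℂ) = (((-t) : ℝ) : ℂ) := by push_cast; ring
    rw [this, ← Complex.ofReal_exp, Complex.norm_real, Real.norm_eq_abs,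
      abs_of_pos (Real.exp_pos _), Real.exp_le_one_iff]
    linarith
  refine ⟨?_, hres, ?_⟩
  · intro i j
    rw [hres]
    simp only [Matrix.add_apply, Matrix.smul_apply, smul_eq_mul]
    calc ‖Complex.exp ((t:ℂ) * p) * PiPlus d ξ i j + Complex.exp ((t:ℂ) * m) * PiMinus d ξ i j
          + Complex.exp (-(t:ℂ)) * Pi0 d ξ i j‖
        ≤ ‖Complex.exp ((t:ℂ) * p) * PiPlus d ξ i j‖ + ‖Complex.exp ((t:ℂ) * m) * PiMinus d ξ i j‖
          + ‖Complex.exp (-(t:ℂ)) * Pi0 d ξ i j‖ := norm_add₃_le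
      _ ≤ 1 * (4 * u₀) + 1 * (4 * u₀) + 1 * 2 := by
          rw [norm_mul, norm_mul, norm_mul]
          have b1 := mul_le_mul hexp_p (hPpb i j) (norm_nonneg _) zero_le_one
          have b2 := mul_le_mul hexp_m (hPmb i j) (norm_nonneg _) zero_le_one
          have b3 := mul_le_mul hexp0 (hP0b i j) (norm_nonneg _) zero_le_one
          linarith
      _ ≤ 15 * u₀ := by nlinarith
  · intro i j
    refine ⟨le_trans (hPpb i j) (by nlinarith), le_trans (hPmb i j) (by nlinarith),
      le_trans (hP0b i j) (by nlinarith)⟩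

end
end
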